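/- arXiv:1704.04938 — 7 statements merged into one kernel-verified Lean document; each statement's English description precedes it below -/
import Mathlib

section
/- Suppose f : ℝ → ℝ is locally Lipschitz. Then the map F(u) = -u + J *_ρ (f∘u) + h sends bounded continuous functions to bounded continuous functions, and for every R > 0, if k_R is a Lipschitz constant for f on the interval [-R, R], then for all bounded continuous u, v with ‖u‖_∞ ≤ R and ‖v‖_∞ ≤ R one has ‖F(u) - F(v)‖_∞ ≤ (1 + k_R ‖J‖_{L¹(ℝ^N)} ‖ρ‖_∞) ‖u - v‖_∞. -/
open MeasureTheory Real
open scoped Convolution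

/-- The weighted convolution `(J *_ρ v)(x) = ∫ J(x-y) v(y) ρ(y) dy` on `ℝ^N`. -/
noncomputable def convW {N : ℕ} (J ρ v : (Fin N → ℝ) → ℝ) (x : Fin N → ℝ) : ℝ :=
  ∫ y, J (x - y) * v y * ρ y

lemma convW_eq {N : ℕ} (J ρ v : (Fin N → ℝ) → ℝ) (x : Fin N → ℝ) :
    convW J ρ v x = ∫ t, J t * (v (x - t) * ρ (x - t)) := by
  unfold convW
  rw [← MeasureTheory.integral_sub_left_eq_self
    (fun t => J t * (v (x - t) * ρ (x - t))) volume x]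
  simp [sub_sub_cancel, mul_assoc]

lemma integrable_conv_integrand {N : ℕ} {J : (Fin N → ℝ) → ℝ} (hJ : Integrable J)
    {b : (Fin N → ℝ) → ℝ} (hb : Continuous b) {C : ℝ} (hbC : ∀ t, |b t| ≤ C)
    (x : Fin N → ℝ) : Integrable (fun t => J t * b (x - t)) := by
  have hm : AEStronglyMeasurable (fun t => b (x - t)) volume :=
    (hb.comp (continuous_const.sub continuous_id)).aestronglyMeasurable
  have := hJ.bdd_mul (c := C) hm (Filter.Eventually.of_forall fun t => by simpa using hbC (x - t))
  simpa [mul_comm] using this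

lemma continuous_conv {N : ℕ} {J : (Fin N → ℝ) → ℝ} (hJ : Integrable J)
    {b : (Fin N → ℝ) → ℝ} (hb : Continuous b) {C : ℝ} (hbC : ∀ t, |b t| ≤ C) :
    Continuous (fun x : Fin N → ℝ => ∫ t, J t * b (x - t)) := by
  have hbdd : BddAbove (Set.range fun t => ‖b t‖) :=
    ⟨C, by rintro _ ⟨t, rfl⟩; simpa using hbC t⟩
  have hc : Continuous (J ⋆[ContinuousLinearMap.mul ℝ ℝ, volume] b) :=
    hbdd.continuous_convolution_right_of_integrable (ContinuousLinearMap.mul ℝ ℝ) hJ hb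
  have he : (fun x : Fin N → ℝ => ∫ t, J t * b (x - t))
      = J ⋆[ContinuousLinearMap.mul ℝ ℝ, volume] b := by
    funext x
    simp [convolution_def, ContinuousLinearMap.mul_apply']
  rw [he]; exact hc

lemma conv_bound {N : ℕ} {J : (Fin N → ℝ) → ℝ} (hJ : Integrable J) (hJpos : ∀ x, 0 ≤ J x)
    {b : (Fin N → ℝ) → ℝ} (hb : Continuous b) {C : ℝ} (hC : 0 ≤ C) (hbC : ∀ t, |b t| ≤ C)
    (x : Fin N → ℝ) : |∫ t, J t * b (x - t)| ≤ (∫ t, J t) * C := by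
  have hint := integrable_conv_integrand hJ hb hbC x
  calc |∫ t, J t * b (x - t)| ≤ ∫ t, |J t * b (x - t)| := by
        simpa only [Real.norm_eq_abs] using norm_integral_le_integral_norm (fun t => J t * b (x - t))
    _ ≤ ∫ t, J t * C := by
        refine integral_mono hint.abs (hJ.mul_const C) fun t => ?_
        rw [abs_mul, abs_of_nonneg (hJpos t)]
        exact mul_le_mul_of_nonneg_left (hbC _) (hJpos t)
    _ = (∫ t, J t) * C := integral_mul_const C _

/-- if `f` is locally Lipschitz, then `F(u) = -u + J *_ρ (f∘u) + h` maps
bounded continuous functions to bounded continuous functions, and is Lipschitz on balls: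
if `k_R` is a Lipschitz constant for `f` on `[-R,R]` then for `‖u‖_∞, ‖v‖_∞ ≤ R`,
`‖F(u) - F(v)‖_∞ ≤ (1 + k_R ‖J‖_{L¹} ‖ρ‖_∞) ‖u - v‖_∞`. -/
theorem F_maps_Cb_and_lipschitz_on_balls {N : ℕ} (hN : 1 ≤ N)
    (J ρ h : (Fin N → ℝ) → ℝ)
    (hJint : Integrable J) (hJpos : ∀ x, 0 ≤ J x)
    (hρcont : Continuous ρ) (hρpos : ∀ x, 0 ≤ ρ x)
    (hρbdd : BddAbove (Set.range ρ)) (hρint : Integrable ρ)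
    (hhcont : Continuous h) (hhbdd : ∃ C, ∀ x, |h x| ≤ C)
    (f : ℝ → ℝ) (hf : LocallyLipschitz f) :
    (∀ u : (Fin N → ℝ) → ℝ, Continuous u → (∃ C, ∀ x, |u x| ≤ C) →
        Continuous (fun x => -u x + convW J ρ (fun y => f (u y)) x + h x) ∧
        ∃ C, ∀ x, |(-u x + convW J ρ (fun y => f (u y)) x + h x)| ≤ C) ∧
    (∀ R : ℝ, 0 < R → ∀ kR : ℝ,
      (∀ a ∈ Set.Icc (-R) R, ∀ b ∈ Set.Icc (-R) R, |f a - f b| ≤ kR * |a - b|) →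
      ∀ u v : (Fin N → ℝ) → ℝ, Continuous u → Continuous v →
        (∀ x, |u x| ≤ R) → (∀ x, |v x| ≤ R) →
        ∀ x, |(-u x + convW J ρ (fun y => f (u y)) x + h x) -
              (-v x + convW J ρ (fun y => f (v y)) x + h x)| ≤
            (1 + kR * (∫ y, J y) * (⨆ z, ρ z)) * (⨆ z, |u z - v z|)) := by
  have hfc : Continuous f := hf.continuous
  set P : ℝ := ⨆ z, ρ z with hP
  have hρP : ∀ y, ρ y ≤ P := fun y => le_ciSup hρbdd y
  have hP0 : 0 ≤ P := le_trans (hρpos 0) (hρP 0)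
  have hJ0 : 0 ≤ ∫ t, J t := integral_nonneg hJpos
  constructor
  · -- Part 1
    intro u hu ⟨Cu, hCu⟩
    have hCu0 : 0 ≤ Cu := le_trans (abs_nonneg _) (hCu 0)
    obtain ⟨M, hM⟩ := (isCompact_Icc (a := -Cu) (b := Cu)).exists_bound_of_continuousOn
      hfc.continuousOn
    have hM0 : 0 ≤ M := le_trans (norm_nonneg _) (hM 0 (by constructor <;> linarith))
    have hfu : ∀ y, |f (u y)| ≤ M := fun y =>
      hM (u y) (abs_le.mp (hCu y))
    set b : (Fin N → ℝ) → ℝ := fun y => f (u y) * ρ y with hb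
    have hbc : Continuous b := (hfc.comp hu).mul hρcont
    have hbC : ∀ y, |b y| ≤ M * P := fun y => by
      rw [hb, abs_mul, abs_of_nonneg (hρpos y)]
      exact mul_le_mul (hfu y) (hρP y) (hρpos y) hM0
    constructor
    · have hc : Continuous fun x => ∫ t, J t * b (x - t) :=
        continuous_conv hJint hbc hbC
      have he : (fun x => -u x + convW J ρ (fun y => f (u y)) x + h x)
          = fun x => -u x + (∫ t, J t * b (x - t)) + h x := by
        funext x; rw [convW_eq J ρ (fun y => f (u y)) x]
      rw [he]
      exact (hu.neg.add hc).add hhcont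
    · obtain ⟨Ch, hCh⟩ := hhbdd
      refine ⟨Cu + (∫ t, J t) * (M * P) + Ch, fun x => ?_⟩
      have h1 : |convW J ρ (fun y => f (u y)) x| ≤ (∫ t, J t) * (M * P) := by
        rw [convW_eq J ρ _ x]
        exact conv_bound hJint hJpos hbc (by positivity) hbC x
      calc |(-u x + convW J ρ (fun y => f (u y)) x + h x)|
          ≤ |(-u x + convW J ρ (fun y => f (u y)) x)| + |h x| := abs_add_le _ _
        _ ≤ (|(-u x)| + |convW J ρ (fun y => f (u y)) x|) + |h x| := by
            gcongr; exact abs_add_le _ _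
        _ ≤ Cu + (∫ t, J t) * (M * P) + Ch := by
            rw [abs_neg]
            have := hCu x; have := hCh x; linarith
  · -- Part 2
    intro R hR kR hk u v hu hv huR hvR x
    have hkR0 : 0 ≤ kR := by
      have h1 := hk R ⟨by linarith, le_refl R⟩ (-R) ⟨le_refl _, by linarith⟩
      have h2 : |R - -R| = 2 * R := by rw [abs_of_nonneg] <;> linarith
      nlinarith [abs_nonneg (f R - f (-R))]
    set S : ℝ := ⨆ z, |u z - v z| with hS
    have hSbdd : BddAbove (Set.range fun z => |u z - v z|) := by
      refine ⟨2 * R, ?_⟩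
      rintro _ ⟨z, rfl⟩
      calc |u z - v z| ≤ |u z| + |v z| := abs_sub _ _
        _ ≤ 2 * R := by have := huR z; have := hvR z; linarith
    have hSle : ∀ z, |u z - v z| ≤ S := fun z => le_ciSup hSbdd z
    have hS0 : 0 ≤ S := le_trans (abs_nonneg _) (hSle 0)
    set bu : (Fin N → ℝ) → ℝ := fun y => f (u y) * ρ y with hbu
    set bv : (Fin N → ℝ) → ℝ := fun y => f (v y) * ρ y with hbv
    -- bounds for f on [-R,R]
    obtain ⟨M, hM⟩ := (isCompact_Icc (a := -R) (b := R)).exists_bound_of_continuousOn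
      hfc.continuousOn
    have hM0 : 0 ≤ M := le_trans (norm_nonneg _) (hM 0 (by constructor <;> linarith))
    have hbuc : Continuous bu := (hfc.comp hu).mul hρcont
    have hbvc : Continuous bv := (hfc.comp hv).mul hρcont
    have hbuC : ∀ y, |bu y| ≤ M * P := fun y => by
      rw [hbu, abs_mul, abs_of_nonneg (hρpos y)]
      exact mul_le_mul (hM _ (abs_le.mp (huR y))) (hρP y) (hρpos y) hM0
    have hbvC : ∀ y, |bv y| ≤ M * P := fun y => by
      rw [hbv, abs_mul, abs_of_nonneg (hρpos y)]
      exact mul_le_mul (hM _ (abs_le.mp (hvR y))) (hρP y) (hρpos y) hM0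
    have hiu := integrable_conv_integrand hJint hbuc hbuC x
    have hiv := integrable_conv_integrand hJint hbvc hbvC x
    have hdiff : convW J ρ (fun y => f (u y)) x - convW J ρ (fun y => f (v y)) x
        = ∫ t, (J t * bu (x - t) - J t * bv (x - t)) := by
      rw [convW_eq, convW_eq, integral_sub hiu hiv]
    have hptwise : ∀ t, |J t * bu (x - t) - J t * bv (x - t)| ≤ J t * (kR * S * P) := by
      intro t
      have hlip : |f (u (x - t)) - f (v (x - t))| ≤ kR * |u (x - t) - v (x - t)| :=
        hk _ (abs_le.mp (huR _)) _ (abs_le.mp (hvR _))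
      have h1 : |f (u (x - t)) - f (v (x - t))| ≤ kR * S :=
        le_trans hlip (mul_le_mul_of_nonneg_left (hSle _) hkR0)
      have h2 : J t * bu (x - t) - J t * bv (x - t)
          = J t * ((f (u (x - t)) - f (v (x - t))) * ρ (x - t)) := by
        rw [hbu, hbv]; ring
      rw [h2, abs_mul, abs_mul, abs_of_nonneg (hJpos t), abs_of_nonneg (hρpos _)]
      refine mul_le_mul_of_nonneg_left ?_ (hJpos t)
      calc |f (u (x - t)) - f (v (x - t))| * ρ (x - t) ≤ (kR * S) * P :=
            mul_le_mul h1 (hρP _) (hρpos _) (by positivity)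
        _ = kR * S * P := rfl
    have hABbound : |convW J ρ (fun y => f (u y)) x - convW J ρ (fun y => f (v y)) x|
        ≤ (∫ t, J t) * (kR * S * P) := by
      rw [hdiff]
      calc |∫ t, (J t * bu (x - t) - J t * bv (x - t))|
          ≤ ∫ t, |J t * bu (x - t) - J t * bv (x - t)| := by
            simpa only [Real.norm_eq_abs] using norm_integral_le_integral_norm
              (fun t => J t * bu (x - t) - J t * bv (x - t))
        _ ≤ ∫ t, J t * (kR * S * P) := by
            refine integral_mono (hiu.sub hiv).abs (hJint.mul_const _) hptwise
        _ = (∫ t, J t) * (kR * S * P) := integral_mul_const _ _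
    have hsplit : (-u x + convW J ρ (fun y => f (u y)) x + h x) -
        (-v x + convW J ρ (fun y => f (v y)) x + h x)
        = (v x - u x) + (convW J ρ (fun y => f (u y)) x - convW J ρ (fun y => f (v y)) x) := by
      ring
    rw [hsplit]
    have huvx : |v x - u x| ≤ S := by rw [abs_sub_comm]; exact hSle x
    calc |(v x - u x) + (convW J ρ (fun y => f (u y)) x - convW J ρ (fun y => f (v y)) x)|
        ≤ |v x - u x| + |convW J ρ (fun y => f (u y)) x - convW J ρ (fun y => f (v y)) x| :=
          abs_add_le _ _
      _ ≤ S + (∫ t, J t) * (kR * S * P) := add_le_add huvx hABbound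
      _ = (1 + kR * (∫ y, J y) * P) * S := by ring
end

section
/- Suppose f : ℝ → ℝ is globally Lipschitz with Lipschitz constant k. Then for every continuous u : ℝ^N → ℝ with ‖u‖_ρ < ∞, the function F(u) = -u + J *_ρ (f∘u) + h is continuous with ‖F(u)‖_ρ ≤ ‖u‖_ρ + ‖J‖_{L¹(ℝ^N)} ‖ρ‖_∞ (k ‖u‖_ρ + |f(0)| ‖ρ‖_∞) + ‖h‖_ρ; in particular F maps the weighted space C_ρ(ℝ^N) into itself. -/
open MeasureTheory Real

/-- if `f` is globally Lipschitz with constant `k`, then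
`F(u) = -u + J *_ρ (f∘u) + h` maps `C_ρ(ℝ^N)` into itself, with
`‖F(u)‖_ρ ≤ ‖u‖_ρ + ‖J‖_{L¹} ‖ρ‖_∞ (k ‖u‖_ρ + |f(0)| ‖ρ‖_∞) + ‖h‖_ρ`. -/
theorem F_maps_Crho_into_itself {N : ℕ} (hN : 1 ≤ N)
    (J ρ h : (Fin N → ℝ) → ℝ)
    (hJint : Integrable J) (hJpos : ∀ x, 0 ≤ J x)
    (hρcont : Continuous ρ) (hρpos : ∀ x, 0 ≤ ρ x)
    (hρbdd : BddAbove (Set.range ρ)) (hρint : Integrable ρ)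
    (hhcont : Continuous h) (hhbdd : ∃ C, ∀ x, |h x| ≤ C)
    (f : ℝ → ℝ) (k : ℝ) (hf : ∀ a b : ℝ, |f a - f b| ≤ k * |a - b|)
    (u : (Fin N → ℝ) → ℝ) (hucont : Continuous u)
    (hubdd : BddAbove (Set.range fun x => |u x| * ρ x)) :
    Continuous (fun x => -u x + convW J ρ (fun y => f (u y)) x + h x) ∧
    ∀ x, |(-u x + convW J ρ (fun y => f (u y)) x + h x)| * ρ x ≤
      (⨆ z, |u z| * ρ z) +
        (∫ y, J y) * (⨆ z, ρ z) * (k * (⨆ z, |u z| * ρ z) + |f 0| * (⨆ z, ρ z)) +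
        (⨆ z, |h z| * ρ z) := by
  have hρle : ∀ x, ρ x ≤ ⨆ z, ρ z := fun x => le_ciSup hρbdd x
  have hule : ∀ x, |u x| * ρ x ≤ ⨆ z, |u z| * ρ z := fun x => le_ciSup hubdd x
  have hMρ0 : 0 ≤ ⨆ z, ρ z := le_trans (hρpos 0) (hρle 0)
  have hMu0 : 0 ≤ ⨆ z, |u z| * ρ z :=
    le_trans (mul_nonneg (abs_nonneg _) (hρpos 0)) (hule 0)
  have hk : 0 ≤ k := by
    have h10 := hf 1 0
    rw [show (1:ℝ) - 0 = 1 by ring, abs_one, mul_one] at h10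
    exact le_trans (abs_nonneg _) h10
  -- the bounded continuous function g
  set g : (Fin N → ℝ) → ℝ := fun y => f (u y) * ρ y with hg
  set C : ℝ := k * (⨆ z, |u z| * ρ z) + |f 0| * (⨆ z, ρ z) with hC
  have hgbd : ∀ y, |g y| ≤ C := by
    intro y
    have h1 : |f (u y)| ≤ k * |u y| + |f 0| := by
      have := hf (u y) 0
      rw [sub_zero] at this
      calc |f (u y)| = |f (u y) - f 0 + f 0| := by ring_nf
        _ ≤ |f (u y) - f 0| + |f 0| := abs_add_le _ _
        _ ≤ k * |u y| + |f 0| := by linarith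
    calc |g y| = |f (u y)| * ρ y := by
          rw [hg]; dsimp only; rw [abs_mul, abs_of_nonneg (hρpos y)]
      _ ≤ (k * |u y| + |f 0|) * ρ y := mul_le_mul_of_nonneg_right h1 (hρpos y)
      _ = k * (|u y| * ρ y) + |f 0| * ρ y := by ring
      _ ≤ C := by
          have h3 : k * (|u y| * ρ y) ≤ k * ⨆ z, |u z| * ρ z :=
            mul_le_mul_of_nonneg_left (hule y) hk
          have h2 : |f 0| * ρ y ≤ |f 0| * ⨆ z, ρ z :=
            mul_le_mul_of_nonneg_left (hρle y) (abs_nonneg _)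
          rw [hC]; linarith
  have hC0 : 0 ≤ C := le_trans (abs_nonneg (g 0)) (hgbd 0)
  have hfc : Continuous f := by
    have hlip : LipschitzWith (Real.toNNReal k) f := by
      apply LipschitzWith.of_dist_le_mul
      intro a b
      rw [Real.dist_eq, Real.dist_eq]
      calc |f a - f b| ≤ k * |a - b| := hf a b
        _ ≤ Real.toNNReal k * |a - b| := by
            gcongr
            exact Real.le_coe_toNNReal k
    exact hlip.continuous
  have hgc : Continuous g := (hfc.comp hucont).mul hρcont
  -- key substitution identity
  have hsub : ∀ x, convW J ρ (fun y => f (u y)) x = ∫ z, J z * g (x - z) := by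
    intro x
    have h1 := MeasureTheory.integral_sub_left_eq_self
      (fun y => J (x - y) * g y) (volume : Measure (Fin N → ℝ)) x
    simp only [sub_sub_cancel] at h1
    rw [convW]
    rw [h1]; simp only [hg, mul_assoc]
  -- continuity of the convolution
  have hconvc : Continuous fun x => ∫ z, J z * g (x - z) := by
    rw [continuous_iff_continuousAt]
    intro x₀
    apply MeasureTheory.continuousAt_of_dominated
      (bound := fun z => J z * C)
    · filter_upwards with x
      exact (hJint.aestronglyMeasurable.mul
        ((hgc.comp (continuous_const.sub continuous_id)).aestronglyMeasurable))
    · filter_upwards with x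
      filter_upwards with z
      rw [Real.norm_eq_abs, abs_mul, abs_of_nonneg (hJpos z)]
      exact mul_le_mul_of_nonneg_left (hgbd _) (hJpos z)
    · exact hJint.mul_const C
    · filter_upwards with z
      have : Continuous fun x : Fin N → ℝ => J z * g (x - z) := by fun_prop
      exact this.continuousAt
  have hconvc' : Continuous (convW J ρ (fun y => f (u y))) := by
    have : convW J ρ (fun y => f (u y)) = fun x => ∫ z, J z * g (x - z) :=
      funext hsub
    rw [this]; exact hconvc
  -- bound on the convolution
  have hJnn : 0 ≤ ∫ y, J y := integral_nonneg hJpos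
  have hconvbd : ∀ x, |convW J ρ (fun y => f (u y)) x| ≤ (∫ y, J y) * C := by
    intro x
    have hJx : Integrable (fun y => J (x - y)) := hJint.comp_sub_left x
    have hint : Integrable (fun y => J (x - y) * g y) := by
      have := hJx.bdd_mul (f := g) (c := C) hgc.aestronglyMeasurable
        (Filter.Eventually.of_forall fun y => by rw [Real.norm_eq_abs]; exact hgbd y)
      simpa [mul_comm] using this
    have heq : convW J ρ (fun y => f (u y)) x = ∫ y, J (x - y) * g y := by
      rw [convW]; simp only [hg, mul_assoc]
    rw [heq]
    calc |∫ y, J (x - y) * g y| ≤ ∫ y, |J (x - y) * g y| := by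
          simpa only [Real.norm_eq_abs] using
            norm_integral_le_integral_norm (μ := volume) fun y => J (x - y) * g y
      _ ≤ ∫ y, J (x - y) * C := by
          apply integral_mono hint.abs (hJx.mul_const C)
          intro y
          show |J (x - y) * g y| ≤ J (x - y) * C
          rw [abs_mul, abs_of_nonneg (hJpos _)]
          exact mul_le_mul_of_nonneg_left (hgbd y) (hJpos _)
      _ = (∫ y, J (x - y)) * C := by rw [integral_mul_const]
      _ = (∫ y, J y) * C := by
          rw [MeasureTheory.integral_sub_left_eq_self J (volume : Measure (Fin N → ℝ)) x]
  -- assemble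
  constructor
  · exact (hucont.neg.add hconvc').add hhcont
  · intro x
    have hhbdd' : BddAbove (Set.range fun z => |h z| * ρ z) := by
      obtain ⟨Ch, hCh⟩ := hhbdd
      have hCh0 : 0 ≤ Ch := le_trans (abs_nonneg _) (hCh 0)
      refine ⟨Ch * (⨆ z, ρ z), ?_⟩
      rintro _ ⟨z, rfl⟩
      calc |h z| * ρ z ≤ Ch * ρ z := mul_le_mul_of_nonneg_right (hCh z) (hρpos z)
        _ ≤ Ch * (⨆ z, ρ z) := mul_le_mul_of_nonneg_left (hρle z) hCh0
    have hhle : |h x| * ρ x ≤ ⨆ z, |h z| * ρ z := le_ciSup hhbdd' x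
    have habs : |(-u x + convW J ρ (fun y => f (u y)) x + h x)| ≤
        |u x| + |convW J ρ (fun y => f (u y)) x| + |h x| := by
      calc |(-u x + convW J ρ (fun y => f (u y)) x + h x)|
          ≤ |(-u x + convW J ρ (fun y => f (u y)) x)| + |h x| := abs_add_le _ _
        _ ≤ |(-u x)| + |convW J ρ (fun y => f (u y)) x| + |h x| := by
            linarith [abs_add_le (-u x) (convW J ρ (fun y => f (u y)) x)]
        _ = |u x| + |convW J ρ (fun y => f (u y)) x| + |h x| := by rw [abs_neg]
    calc |(-u x + convW J ρ (fun y => f (u y)) x + h x)| * ρ x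
        ≤ (|u x| + |convW J ρ (fun y => f (u y)) x| + |h x|) * ρ x :=
          mul_le_mul_of_nonneg_right habs (hρpos x)
      _ = |u x| * ρ x + |convW J ρ (fun y => f (u y)) x| * ρ x + |h x| * ρ x := by ring
      _ ≤ (⨆ z, |u z| * ρ z) + ((∫ y, J y) * C) * (⨆ z, ρ z) + (⨆ z, |h z| * ρ z) := by
          refine add_le_add (add_le_add (hule x) ?_) hhle
          calc |convW J ρ (fun y => f (u y)) x| * ρ x
                ≤ ((∫ y, J y) * C) * ρ x :=
                  mul_le_mul_of_nonneg_right (hconvbd x) (hρpos x)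
              _ ≤ ((∫ y, J y) * C) * (⨆ z, ρ z) :=
                  mul_le_mul_of_nonneg_left (hρle x) (mul_nonneg hJnn hC0)
      _ = (⨆ z, |u z| * ρ z) +
            (∫ y, J y) * (⨆ z, ρ z) * (k * (⨆ z, |u z| * ρ z) + |f 0| * (⨆ z, ρ z)) +
            (⨆ z, |h z| * ρ z) := by rw [hC]; ring
end

section
/- Suppose f : ℝ → ℝ is globally Lipschitz with Lipschitz constant k. Then the map F(u) = -u + J *_ρ (f∘u) + h is globally Lipschitz on C_ρ(ℝ^N): for all continuous u, v : ℝ^N → ℝ with ‖u‖_ρ < ∞ and ‖v‖_ρ < ∞, ‖F(u) - F(v)‖_ρ ≤ (1 + k ‖J‖_{L¹(ℝ^N)} ‖ρ‖_∞) ‖u - v‖_ρ. -/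
open MeasureTheory Real

/-- if `f` is globally Lipschitz with constant `k`, then
`F(u) = -u + J *_ρ (f∘u) + h` is globally Lipschitz on `C_ρ(ℝ^N)`:
`‖F(u) - F(v)‖_ρ ≤ (1 + k ‖J‖_{L¹} ‖ρ‖_∞) ‖u - v‖_ρ`. -/
theorem F_globally_lipschitz_Crho {N : ℕ} (hN : 1 ≤ N)
    (J ρ h : (Fin N → ℝ) → ℝ)
    (hJint : Integrable J) (hJpos : ∀ x, 0 ≤ J x)
    (hρcont : Continuous ρ) (hρpos : ∀ x, 0 ≤ ρ x)
    (hρbdd : BddAbove (Set.range ρ)) (hρint : Integrable ρ)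
    (hhcont : Continuous h) (hhbdd : ∃ C, ∀ x, |h x| ≤ C)
    (f : ℝ → ℝ) (k : ℝ) (hf : ∀ a b : ℝ, |f a - f b| ≤ k * |a - b|)
    (u v : (Fin N → ℝ) → ℝ) (hucont : Continuous u) (hvcont : Continuous v)
    (hubdd : BddAbove (Set.range fun x => |u x| * ρ x))
    (hvbdd : BddAbove (Set.range fun x => |v x| * ρ x)) :
    ∀ x, |(-u x + convW J ρ (fun y => f (u y)) x + h x) -
          (-v x + convW J ρ (fun y => f (v y)) x + h x)| * ρ x ≤
        (1 + k * (∫ y, J y) * (⨆ z, ρ z)) * (⨆ z, |u z - v z| * ρ z) := by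
  intro x
  obtain ⟨Cu, hCu⟩ := hubdd
  obtain ⟨Cv, hCv⟩ := hvbdd
  have hCu' : ∀ z, |u z| * ρ z ≤ Cu := fun z => hCu ⟨z, rfl⟩
  have hCv' : ∀ z, |v z| * ρ z ≤ Cv := fun z => hCv ⟨z, rfl⟩
  set M := ⨆ z, |u z - v z| * ρ z with hMdef
  set R := ⨆ z, ρ z with hRdef
  have hdiffbdd : BddAbove (Set.range fun z => |u z - v z| * ρ z) := by
    refine ⟨Cu + Cv, ?_⟩
    rintro _ ⟨z, rfl⟩
    calc |u z - v z| * ρ z ≤ (|u z| + |v z|) * ρ z :=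
          mul_le_mul_of_nonneg_right (abs_sub _ _) (hρpos z)
      _ = |u z| * ρ z + |v z| * ρ z := by ring
      _ ≤ Cu + Cv := add_le_add (hCu' z) (hCv' z)
  have hMle : ∀ z, |u z - v z| * ρ z ≤ M := fun z => le_ciSup hdiffbdd z
  have hM0 : 0 ≤ M :=
    le_trans (mul_nonneg (abs_nonneg _) (hρpos (fun _ => 0))) (hMle (fun _ => 0))
  have hRle : ∀ z, ρ z ≤ R := fun z => le_ciSup hρbdd z
  have hR0 : 0 ≤ R := le_trans (hρpos (fun _ => 0)) (hRle (fun _ => 0))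
  have hk0 : 0 ≤ k := by
    have := hf 1 0
    simp only [sub_zero, abs_one, mul_one] at this
    exact le_trans (abs_nonneg _) this
  have hJ0 : 0 ≤ ∫ y, J y := integral_nonneg hJpos
  have hfc : Continuous f := by
    have : LipschitzWith k.toNNReal f := by
      refine LipschitzWith.of_dist_le_mul fun a b => ?_
      rw [Real.dist_eq, Real.dist_eq]
      exact (hf a b).trans
        (mul_le_mul_of_nonneg_right (Real.le_coe_toNNReal k) (abs_nonneg _))
    exact this.continuous
  have hJx : Integrable (fun y => J (x - y)) := hJint.comp_sub_left x
  have key : ∀ (w : (Fin N → ℝ) → ℝ) (Cw : ℝ), Continuous w →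
      (∀ z, |w z| * ρ z ≤ Cw) →
      Integrable (fun y => J (x - y) * f (w y) * ρ y) := by
    intro w Cw hwc hwb
    refine Integrable.mono' (g := fun y => J (x - y) * (|f 0| * R + k * Cw))
      (hJx.mul_const _)
      (((hJx.aestronglyMeasurable).mul
        ((hfc.comp hwc).aestronglyMeasurable)).mul hρcont.aestronglyMeasurable) ?_
    filter_upwards with y
    rw [Real.norm_eq_abs, abs_mul, abs_mul, abs_of_nonneg (hJpos _),
      abs_of_nonneg (hρpos _)]
    have h2 : |f (w y)| ≤ |f 0| + k * |w y| := by
      have h3 := hf (w y) 0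
      rw [sub_zero] at h3
      calc |f (w y)| = |f 0 + (f (w y) - f 0)| := by ring_nf
        _ ≤ |f 0| + |f (w y) - f 0| := abs_add_le _ _
        _ ≤ |f 0| + k * |w y| := by linarith
    have h1 : |f (w y)| * ρ y ≤ |f 0| * R + k * Cw := by
      calc |f (w y)| * ρ y ≤ (|f 0| + k * |w y|) * ρ y :=
            mul_le_mul_of_nonneg_right h2 (hρpos _)
        _ = |f 0| * ρ y + k * (|w y| * ρ y) := by ring
        _ ≤ |f 0| * R + k * Cw := by
            have := hwb y
            have := hRle y
            have habs0 := abs_nonneg (f 0)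
            nlinarith [mul_le_mul_of_nonneg_left (hwb y) hk0,
              mul_le_mul_of_nonneg_left (hRle y) habs0]
    calc J (x - y) * |f (w y)| * ρ y = J (x - y) * (|f (w y)| * ρ y) := by ring
      _ ≤ J (x - y) * (|f 0| * R + k * Cw) :=
          mul_le_mul_of_nonneg_left h1 (hJpos _)
  have hIu := key u Cu hucont hCu'
  have hIv := key v Cv hvcont hCv'
  have hI : convW J ρ (fun y => f (u y)) x - convW J ρ (fun y => f (v y)) x
      = ∫ y, J (x - y) * (f (u y) - f (v y)) * ρ y := by
    rw [convW, convW, ← integral_sub hIu hIv]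
    congr 1
    ext y
    ring
  have habs : |∫ y, J (x - y) * (f (u y) - f (v y)) * ρ y| ≤ k * M * ∫ y, J y := by
    have hbound : ∀ y, ‖J (x - y) * (f (u y) - f (v y)) * ρ y‖
        ≤ J (x - y) * (k * M) := by
      intro y
      rw [Real.norm_eq_abs, abs_mul, abs_mul, abs_of_nonneg (hJpos _),
        abs_of_nonneg (hρpos _)]
      calc J (x - y) * |f (u y) - f (v y)| * ρ y
          ≤ J (x - y) * (k * |u y - v y|) * ρ y :=
            mul_le_mul_of_nonneg_right
              (mul_le_mul_of_nonneg_left (hf (u y) (v y)) (hJpos _)) (hρpos y)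
        _ = J (x - y) * (k * (|u y - v y| * ρ y)) := by ring
        _ ≤ J (x - y) * (k * M) :=
            mul_le_mul_of_nonneg_left
              (mul_le_mul_of_nonneg_left (hMle y) hk0) (hJpos _)
    have h4 : ‖∫ y, J (x - y) * (f (u y) - f (v y)) * ρ y‖
        ≤ ∫ y, J (x - y) * (k * M) :=
      norm_integral_le_of_norm_le (hJx.mul_const _) (Filter.Eventually.of_forall hbound)
    rw [Real.norm_eq_abs] at h4
    refine h4.trans ?_
    rw [integral_mul_const, integral_sub_left_eq_self J volume x]
    ring_nf
    exact le_of_eq (by ring)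
  have hstart : (-u x + convW J ρ (fun y => f (u y)) x + h x) -
      (-v x + convW J ρ (fun y => f (v y)) x + h x)
      = (v x - u x) + (convW J ρ (fun y => f (u y)) x - convW J ρ (fun y => f (v y)) x) := by
    ring
  rw [hstart, hI]
  have hρx := hρpos x
  have h5 : |(v x - u x) + ∫ y, J (x - y) * (f (u y) - f (v y)) * ρ y| * ρ x
      ≤ |v x - u x| * ρ x + |∫ y, J (x - y) * (f (u y) - f (v y)) * ρ y| * ρ x := by
    rw [← add_mul]
    exact mul_le_mul_of_nonneg_right (abs_add_le _ _) hρx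
  refine h5.trans ?_
  have h6 : |v x - u x| * ρ x ≤ M := by
    rw [abs_sub_comm]
    exact hMle x
  have h7 : |∫ y, J (x - y) * (f (u y) - f (v y)) * ρ y| * ρ x
      ≤ (k * M * ∫ y, J y) * R := by
    have hn : 0 ≤ k * M * ∫ y, J y := by positivity
    exact mul_le_mul habs (hRle x) hρx hn
  calc |v x - u x| * ρ x + |∫ y, J (x - y) * (f (u y) - f (v y)) * ρ y| * ρ x
      ≤ M + (k * M * ∫ y, J y) * R := add_le_add h6 h7
    _ = (1 + k * (∫ y, J y) * R) * M := by ring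
end

section
/- Suppose f : ℝ → ℝ is globally Lipschitz. Then for every continuous u₀ : ℝ^N → ℝ with ‖u₀‖_ρ < ∞ there exists a unique continuous function u : ℝ^N × [0,∞) → ℝ such that u(·,0) = u₀, for each T > 0 the quantity sup_{t∈[0,T]} ‖u(·,t)‖_ρ is finite, and u satisfies the variation of constants formula u(x,t) = e^{-t} u₀(x) + ∫₀^t e^{s-t} [(J *_ρ (f∘u(·,s)))(x) + h(x)] ds for all x ∈ ℝ^N and t ≥ 0; i.e. the Cauchy problem for ∂_t u = -u + J *_ρ (f∘u) + h is well posed in C_ρ(ℝ^N) with globally defined solutions. -/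
open MeasureTheory Real

/-- `u` is a globally defined mild solution in `C_ρ(ℝ^N)` of
`∂_t u = -u + J *_ρ (f∘u) + h` with initial datum `u₀`: it is continuous on
`ℝ^N × [0,∞)`, starts at `u₀`, has `sup_{t∈[0,T]} ‖u(·,t)‖_ρ < ∞` for each `T > 0`, and
satisfies the variation of constants formula. -/
def IsMildSolutionCrho {N : ℕ} (J ρ h : (Fin N → ℝ) → ℝ) (f : ℝ → ℝ)
    (u₀ : (Fin N → ℝ) → ℝ) (u : (Fin N → ℝ) → ℝ → ℝ) : Prop :=
  ContinuousOn (fun p : (Fin N → ℝ) × ℝ => u p.1 p.2) (Set.univ ×ˢ Set.Ici (0 : ℝ)) ∧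
  (∀ x, u x 0 = u₀ x) ∧
  (∀ T : ℝ, 0 < T → ∃ C : ℝ, ∀ t ∈ Set.Icc (0:ℝ) T, ∀ x, |u x t| * ρ x ≤ C) ∧
  (∀ x, ∀ t : ℝ, 0 ≤ t →
    u x t = Real.exp (-t) * u₀ x +
      ∫ s in (0:ℝ)..t, Real.exp (s - t) * (convW J ρ (fun y => f (u y s)) x + h x))

lemma aux_contA {N : ℕ} (G : (Fin N → ℝ) × ℝ → ℝ) (hG : Continuous G) (C : ℝ)
    (hC : ∀ p, |G p| ≤ C) :
    Continuous fun p : (Fin N → ℝ) × ℝ => ∫ σ in (0:ℝ)..(max p.2 0), G (p.1, σ) := by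
  have hC0 : 0 ≤ C := le_trans (abs_nonneg _) (hC ((0 : Fin N → ℝ), (0:ℝ)))
  set F : ((Fin N → ℝ) × ℝ) → ℝ → ℝ :=
    fun p σ => (Set.Ioc (0:ℝ) (max p.2 0)).indicator (fun σ => G (p.1, σ)) σ with hF
  have key : ∀ p : (Fin N → ℝ) × ℝ,
      (∫ σ in (0:ℝ)..(max p.2 0), G (p.1, σ)) = ∫ σ, F p σ := by
    intro p
    rw [intervalIntegral.integral_of_le (le_max_right _ _),
      ← integral_indicator measurableSet_Ioc]
  have : Continuous fun p : (Fin N → ℝ) × ℝ => ∫ σ, F p σ := by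
    rw [continuous_iff_continuousAt]
    intro p₀
    set τ₀ : ℝ := max p₀.2 0 with hτ₀
    apply continuousAt_of_dominated (bound := (Set.Ioc (0:ℝ) (τ₀ + 1)).indicator fun _ => C)
    · filter_upwards with p
      exact ((hG.comp (continuous_const.prodMk continuous_id)).aestronglyMeasurable).indicator
        measurableSet_Ioc
    · have hev : ∀ᶠ p : (Fin N → ℝ) × ℝ in nhds p₀, p.2 < p₀.2 + 1 :=
        continuous_snd.continuousAt.eventually_lt continuousAt_const (by linarith)
      filter_upwards [hev] with p hp
      filter_upwards with σ
      by_cases hσ : σ ∈ Set.Ioc (0:ℝ) (max p.2 0)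
      · have h1 : σ ∈ Set.Ioc (0:ℝ) (τ₀ + 1) :=
          ⟨hσ.1, hσ.2.trans (max_le (by linarith [le_max_left p₀.2 (0:ℝ)])
            (by linarith [le_max_right p₀.2 (0:ℝ)]))⟩
        rw [hF]; simp only [Set.indicator_of_mem hσ, Set.indicator_of_mem h1]
        exact hC _
      · rw [hF]; simp only [Set.indicator_of_notMem hσ, norm_zero]
        by_cases h1 : σ ∈ Set.Ioc (0:ℝ) (τ₀ + 1)
        · simp [Set.indicator_of_mem h1, hC0]
        · simp [Set.indicator_of_notMem h1]
    · rw [integrable_indicator_iff measurableSet_Ioc]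
      exact integrableOn_const measure_Ioc_lt_top.ne
    · have hne : ∀ᵐ σ : ℝ, σ ≠ τ₀ := by
        rw [ae_iff]
        simp only [not_not, Set.setOf_eq_eq_singleton]
        exact Real.volume_singleton
      filter_upwards [hne] with σ hσne
      rcases le_or_gt σ 0 with hσ0 | hσ0
      · have : (fun p : (Fin N → ℝ) × ℝ => F p σ) = fun _ => 0 := by
          funext p
          rw [hF]
          exact Set.indicator_of_notMem (fun hmem => absurd hmem.1 (not_lt.2 hσ0)) _
        rw [this]; exact continuousAt_const
      · rcases lt_or_gt_of_ne hσne with hlt | hgt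
        · -- σ < τ₀ : eventually σ ∈ Ioc 0 (max p.2 0), F p σ = G (p.1, σ)
          have hev : ∀ᶠ p : (Fin N → ℝ) × ℝ in nhds p₀, σ < max p.2 0 :=
            (continuousAt_const).eventually_lt
              ((continuous_snd.max continuous_const).continuousAt) hlt
          have hc : ContinuousAt (fun p : (Fin N → ℝ) × ℝ => G (p.1, σ)) p₀ :=
            (hG.comp (continuous_fst.prodMk continuous_const)).continuousAt
          apply hc.congr
          filter_upwards [hev] with p hp
          rw [hF]
          simp only [Set.indicator_of_mem (show σ ∈ Set.Ioc (0:ℝ) (max p.2 0) from ⟨hσ0, le_of_lt hp⟩)]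
        · have hev : ∀ᶠ p : (Fin N → ℝ) × ℝ in nhds p₀, max p.2 0 < σ :=
            ((continuous_snd.max continuous_const).continuousAt).eventually_lt
              continuousAt_const hgt
          have hc : ContinuousAt (fun _ : (Fin N → ℝ) × ℝ => (0:ℝ)) p₀ := continuousAt_const
          apply hc.congr
          filter_upwards [hev] with p hp
          rw [hF]
          simp only [Set.indicator_of_notMem
            (show σ ∉ Set.Ioc (0:ℝ) (max p.2 0) from fun hmem => absurd hmem.2 (not_le.2 hp))]
  simpa only [key] using this

/-- Continuity with only local-in-time bounds. -/
lemma aux_contB {N : ℕ} (G : (Fin N → ℝ) × ℝ → ℝ) (hG : Continuous G)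
    (hC : ∀ T : ℝ, ∃ C, ∀ x σ, σ ∈ Set.Icc (0:ℝ) T → |G (x, σ)| ≤ C) :
    Continuous fun p : (Fin N → ℝ) × ℝ => ∫ σ in (0:ℝ)..(max p.2 0), G (p.1, σ) := by
  rw [continuous_iff_continuousAt]
  intro p₀
  set T : ℝ := max p₀.2 0 + 1 with hT
  obtain ⟨C, hCb⟩ := hC T
  set Gc : (Fin N → ℝ) × ℝ → ℝ := fun p => G (p.1, min (max p.2 0) T) with hGc
  have hGcc : Continuous Gc :=
    hG.comp (continuous_fst.prodMk ((continuous_snd.max continuous_const).min continuous_const))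
  have hTpos : (0:ℝ) ≤ T := by positivity
  have hGcb : ∀ p, |Gc p| ≤ C := by
    intro p
    exact hCb _ _ ⟨le_min (le_max_right _ _) hTpos, min_le_right _ _⟩
  have hcont := aux_contA Gc hGcc C hGcb
  have hev : ∀ᶠ p : (Fin N → ℝ) × ℝ in nhds p₀, max p.2 0 ≤ T := by
    have : ∀ᶠ p : (Fin N → ℝ) × ℝ in nhds p₀, p.2 < p₀.2 + 1 :=
      continuous_snd.continuousAt.eventually_lt continuousAt_const (by linarith)
    filter_upwards [this] with p hp
    exact max_le (by linarith [le_max_left p₀.2 (0:ℝ)]) (by linarith [le_max_right p₀.2 (0:ℝ)])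
  apply hcont.continuousAt.congr
  filter_upwards [hev] with p hp
  apply intervalIntegral.integral_congr
  intro σ hσ
  rw [Set.uIcc_of_le (le_max_right _ _)] at hσ
  rw [hGc]
  simp only
  rw [max_eq_left hσ.1, min_eq_left (hσ.2.trans hp)]

/-- Continuity of the convolution-type integral. -/
lemma aux_contC {N : ℕ} (J : (Fin N → ℝ) → ℝ) (hJ : Integrable J)
    (Ψ : (Fin N → ℝ) × ℝ → ℝ) (hΨ : Continuous Ψ) (C : ℝ) (hC : ∀ p, |Ψ p| ≤ C) :
    Continuous fun p : (Fin N → ℝ) × ℝ => ∫ z, J z * Ψ (p.1 - z, p.2) := by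
  apply continuous_of_dominated (bound := fun z => |J z| * C)
  · intro p
    apply hJ.aestronglyMeasurable.mul
    exact (hΨ.comp ((continuous_const.sub continuous_id).prodMk continuous_const)).aestronglyMeasurable
  · intro p
    filter_upwards with z
    rw [Real.norm_eq_abs, abs_mul]
    exact mul_le_mul_of_nonneg_left (hC _) (abs_nonneg _)
  · exact hJ.abs.mul_const C
  · filter_upwards with z
    exact continuous_const.mul (hΨ.comp ((continuous_fst.sub continuous_const).prodMk continuous_snd))

/-- change of variables for convW -/
lemma aux_convW_eq {N : ℕ} (J ρ v : (Fin N → ℝ) → ℝ) (x : Fin N → ℝ) :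
    (∫ y, J (x - y) * v y * ρ y) = ∫ z, J z * v (x - z) * ρ (x - z) := by
  have := MeasureTheory.integral_sub_left_eq_self
    (fun y => J (x - y) * v y * ρ y) (volume : Measure (Fin N → ℝ)) x
  rw [← this]
  congr 1
  funext z
  simp [sub_sub_cancel]

lemma aux_exp_int (c τ : ℝ) (hc : 0 < c) :
    ∫ σ in (0:ℝ)..τ, Real.exp (c * σ) = (Real.exp (c * τ) - 1) / c := by
  have h : ∀ σ ∈ Set.uIcc (0:ℝ) τ, HasDerivAt (fun σ => Real.exp (c * σ) / c) (Real.exp (c * σ)) σ := by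
    intro σ _
    have h1 : HasDerivAt (fun σ : ℝ => c * σ) c σ := by
      simpa using (hasDerivAt_id σ).const_mul c
    have : HasDerivAt (fun σ => Real.exp (c * σ)) (Real.exp (c * σ) * c) σ :=
      (Real.hasDerivAt_exp (c * σ)).comp σ h1
    have := this.div_const c
    simpa [mul_div_assoc, mul_div_cancel_right₀ _ (ne_of_gt hc)] using this
  rw [intervalIntegral.integral_eq_sub_of_hasDerivAt h
    ((Real.continuous_exp.comp (continuous_const.mul continuous_id)).intervalIntegrable 0 τ)]
  simp [sub_div]

lemma aux_est (lam τ D : ℝ) (hlam : 0 ≤ lam) (hτ : 0 ≤ τ) (hD : 0 ≤ D)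
    (g : ℝ → ℝ) (hg : Continuous g) (hgD : ∀ σ, |g σ| ≤ D) :
    |∫ σ in (0:ℝ)..τ, Real.exp (σ - τ) * (Real.exp (lam * σ) * g σ)| ≤
      Real.exp (lam * τ) * D / (1 + lam) := by
  have hc : (0:ℝ) < 1 + lam := by linarith
  have h1 : |∫ σ in (0:ℝ)..τ, Real.exp (σ - τ) * (Real.exp (lam * σ) * g σ)| ≤
      |∫ σ in (0:ℝ)..τ, Real.exp (σ - τ) * (Real.exp (lam * σ) * D)| := by
    rw [← Real.norm_eq_abs]
    apply intervalIntegral.norm_integral_le_abs_of_norm_le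
    · filter_upwards with σ
      rw [Real.norm_eq_abs, abs_mul, abs_mul]
      rw [abs_of_nonneg (Real.exp_nonneg _), abs_of_nonneg (Real.exp_nonneg _)]
      exact mul_le_mul_of_nonneg_left
        (mul_le_mul_of_nonneg_left (hgD σ) (Real.exp_nonneg _)) (Real.exp_nonneg _)
    · exact ((Real.continuous_exp.comp (continuous_id.sub continuous_const)).mul
        ((Real.continuous_exp.comp (continuous_const.mul continuous_id)).mul
          continuous_const)).intervalIntegrable 0 τ
  have h2 : (∫ σ in (0:ℝ)..τ, Real.exp (σ - τ) * (Real.exp (lam * σ) * D)) =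
      ((Real.exp ((1 + lam) * τ) - 1) / (1 + lam)) * D / Real.exp τ := by
    have : (fun σ => Real.exp (σ - τ) * (Real.exp (lam * σ) * D)) =
        fun σ => (Real.exp ((1 + lam) * σ)) * D / Real.exp τ := by
      funext σ
      rw [Real.exp_sub, show (1 + lam) * σ = σ + lam * σ by ring, Real.exp_add]
      ring
    rw [this, intervalIntegral.integral_div, intervalIntegral.integral_mul_const,
      aux_exp_int _ _ hc]
  refine h1.trans ?_
  rw [h2]
  have hE1 : 1 ≤ Real.exp ((1 + lam) * τ) := by
    rw [show (1:ℝ) = Real.exp 0 by simp]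
    exact Real.exp_le_exp.2 (by positivity)
  have hnn : (0:ℝ) ≤ (Real.exp ((1 + lam) * τ) - 1) / (1 + lam) * D / Real.exp τ :=
    div_nonneg (mul_nonneg (div_nonneg (by linarith) (le_of_lt hc)) hD) (Real.exp_nonneg τ)
  rw [abs_of_nonneg hnn]
  have key : (Real.exp ((1 + lam) * τ) - 1) / Real.exp τ ≤ Real.exp (lam * τ) := by
    rw [div_le_iff₀ (Real.exp_pos τ), ← Real.exp_add]
    rw [show lam * τ + τ = (1 + lam) * τ by ring]
    linarith
  calc ((Real.exp ((1 + lam) * τ) - 1) / (1 + lam)) * D / Real.exp τ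
      = ((Real.exp ((1 + lam) * τ) - 1) / Real.exp τ) * (D / (1 + lam)) := by ring
    _ ≤ Real.exp (lam * τ) * (D / (1 + lam)) :=
        mul_le_mul_of_nonneg_right key (by positivity)
    _ = Real.exp (lam * τ) * D / (1 + lam) := by ring

noncomputable def auxU {N : ℕ} (u₀ h : (Fin N → ℝ) → ℝ) (lam : ℝ)
    (r : BoundedContinuousFunction ((Fin N → ℝ) × ℝ) ℝ) (y : Fin N → ℝ) (t : ℝ) : ℝ :=
  Real.exp (-(max t 0)) * u₀ y +
    ∫ σ in (0:ℝ)..max t 0, Real.exp (σ - max t 0) * (Real.exp (lam * σ) * r (y, σ) + h y)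

lemma auxU_zero {N : ℕ} (u₀ h : (Fin N → ℝ) → ℝ) (lam : ℝ)
    (r : BoundedContinuousFunction ((Fin N → ℝ) × ℝ) ℝ) (y : Fin N → ℝ) :
    auxU u₀ h lam r y 0 = u₀ y := by
  simp [auxU]

lemma auxU_cont {N : ℕ} (u₀ h : (Fin N → ℝ) → ℝ) (hu₀c : Continuous u₀)
    (hhcont : Continuous h) (Ch : ℝ) (hCh : ∀ x, |h x| ≤ Ch) (lam : ℝ) (hlam : 0 ≤ lam)
    (r : BoundedContinuousFunction ((Fin N → ℝ) × ℝ) ℝ) :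
    Continuous fun p : (Fin N → ℝ) × ℝ => auxU u₀ h lam r p.1 p.2 := by
  unfold auxU
  apply Continuous.add
  · exact (Real.continuous_exp.comp (continuous_snd.max continuous_const).neg).mul
      (hu₀c.comp continuous_fst)
  · have hrw : ∀ p : (Fin N → ℝ) × ℝ,
        (∫ σ in (0:ℝ)..max p.2 0, Real.exp (σ - max p.2 0) *
          (Real.exp (lam * σ) * r (p.1, σ) + h p.1)) =
        Real.exp (-(max p.2 0)) * ∫ σ in (0:ℝ)..max p.2 0,
          Real.exp σ * (Real.exp (lam * σ) * r (p.1, σ) + h p.1) := by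
      intro p
      rw [← intervalIntegral.integral_const_mul]
      congr 1
      funext σ
      rw [show σ - max p.2 0 = -(max p.2 0) + σ by ring, Real.exp_add]
      ring
    simp only [hrw]
    apply Continuous.mul
    · exact Real.continuous_exp.comp (continuous_snd.max continuous_const).neg
    · apply aux_contB (G := fun q : (Fin N → ℝ) × ℝ => Real.exp q.2 * (Real.exp (lam * q.2) * r q + h q.1))
      · apply Continuous.mul (Real.continuous_exp.comp continuous_snd)
        apply Continuous.add
        · exact (Real.continuous_exp.comp (continuous_const.mul continuous_snd)).mul
            (r.continuous.comp (continuous_fst.prodMk continuous_snd))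
        · exact hhcont.comp continuous_fst
      · intro T
        set T' : ℝ := max T 0 with hT'
        refine ⟨Real.exp T' * (Real.exp (lam * T') * ‖r‖ + Ch), ?_⟩
        intro y σ hσ
        have hσ0 : 0 ≤ σ := hσ.1
        have hσT : σ ≤ T' := le_trans hσ.2 (le_max_left _ _)
        rw [abs_mul]
        have h1 : |Real.exp σ| ≤ Real.exp T' := by
          rw [abs_of_nonneg (Real.exp_nonneg _)]; exact Real.exp_le_exp.2 hσT
        have h2 : |Real.exp (lam * σ) * r (y, σ) + h y| ≤ Real.exp (lam * T') * ‖r‖ + Ch := by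
          refine (abs_add_le _ _).trans (add_le_add ?_ (hCh y))
          rw [abs_mul, abs_of_nonneg (Real.exp_nonneg _)]
          refine mul_le_mul (Real.exp_le_exp.2 (mul_le_mul_of_nonneg_left hσT hlam)) ?_
            (abs_nonneg _) (Real.exp_nonneg _)
          rw [← Real.norm_eq_abs]
          exact r.norm_coe_le_norm (y, σ)
        have hnn : (0:ℝ) ≤ Real.exp (lam * T') * ‖r‖ + Ch := by
          have := le_trans (abs_nonneg _) (h2)
          linarith
        exact mul_le_mul h1 h2 (abs_nonneg _) (Real.exp_nonneg _)

lemma auxU_bound {N : ℕ} (u₀ h ρ : (Fin N → ℝ) → ℝ)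
    (hρpos : ∀ x, 0 ≤ ρ x) (Mρ : ℝ) (hMρ : ∀ x, ρ x ≤ Mρ)
    (B₀ : ℝ) (hB₀ : ∀ x, |u₀ x| * ρ x ≤ B₀)
    (Ch : ℝ) (hCh : ∀ x, |h x| ≤ Ch) (hCh0 : 0 ≤ Ch) (lam : ℝ) (hlam : 0 ≤ lam)
    (r : BoundedContinuousFunction ((Fin N → ℝ) × ℝ) ℝ)
    (T : ℝ) (hT : 0 ≤ T) (y : Fin N → ℝ) (t : ℝ) (htT : max t 0 ≤ T) :
    |auxU u₀ h lam r y t| * ρ y ≤ B₀ + Mρ * (Real.exp (lam * T) * ‖r‖ / (1 + lam) + Ch) := by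
  set τ : ℝ := max t 0 with hτdef
  have hτ0 : (0:ℝ) ≤ τ := le_max_right _ _
  have hsplit : (∫ σ in (0:ℝ)..τ, Real.exp (σ - τ) * (Real.exp (lam * σ) * r (y, σ) + h y)) =
      (∫ σ in (0:ℝ)..τ, Real.exp (σ - τ) * (Real.exp (lam * σ) * r (y, σ))) +
      (∫ σ in (0:ℝ)..τ, Real.exp (σ - τ) * (Real.exp ((0:ℝ) * σ) * h y)) := by
    rw [← intervalIntegral.integral_add]
    · congr 1; funext σ; simp; ring
    · exact ((Real.continuous_exp.comp (continuous_id.sub continuous_const)).mul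
        ((Real.continuous_exp.comp (continuous_const.mul continuous_id)).mul
          (r.continuous.comp (continuous_const.prodMk continuous_id)))).intervalIntegrable 0 τ
    · exact ((Real.continuous_exp.comp (continuous_id.sub continuous_const)).mul
        ((Real.continuous_exp.comp (continuous_const.mul continuous_id)).mul
          continuous_const)).intervalIntegrable 0 τ
  have hA : |∫ σ in (0:ℝ)..τ, Real.exp (σ - τ) * (Real.exp (lam * σ) * r (y, σ))| ≤
      Real.exp (lam * τ) * ‖r‖ / (1 + lam) := by
    apply aux_est lam τ ‖r‖ hlam hτ0 (norm_nonneg r)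
    · exact r.continuous.comp (continuous_const.prodMk continuous_id)
    · intro σ
      rw [← Real.norm_eq_abs]
      exact r.norm_coe_le_norm (y, σ)
  have hB : |∫ σ in (0:ℝ)..τ, Real.exp (σ - τ) * (Real.exp ((0:ℝ) * σ) * h y)| ≤ Ch := by
    have := aux_est 0 τ Ch le_rfl hτ0 hCh0 (fun _ => h y) continuous_const (fun _ => hCh y)
    simpa using this
  have habs : |auxU u₀ h lam r y t| ≤
      Real.exp (-τ) * |u₀ y| + (Real.exp (lam * τ) * ‖r‖ / (1 + lam) + Ch) := by
    unfold auxU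
    rw [← hτdef]
    refine (abs_add_le _ _).trans ?_
    rw [abs_mul, abs_of_nonneg (Real.exp_nonneg _)]
    refine add_le_add le_rfl ?_
    rw [hsplit]
    exact (abs_add_le _ _).trans (add_le_add hA hB)
  have hexp1 : Real.exp (-τ) ≤ 1 := Real.exp_le_one_iff.2 (by linarith)
  have hexpT : Real.exp (lam * τ) ≤ Real.exp (lam * T) :=
    Real.exp_le_exp.2 (mul_le_mul_of_nonneg_left htT hlam)
  have hMρ0 : 0 ≤ Mρ := le_trans (hρpos y) (hMρ y)
  have hB₀0 : 0 ≤ B₀ := le_trans (mul_nonneg (abs_nonneg _) (hρpos y)) (hB₀ y)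
  calc |auxU u₀ h lam r y t| * ρ y
      ≤ (Real.exp (-τ) * |u₀ y| + (Real.exp (lam * τ) * ‖r‖ / (1 + lam) + Ch)) * ρ y :=
        mul_le_mul_of_nonneg_right habs (hρpos y)
    _ = Real.exp (-τ) * (|u₀ y| * ρ y) + (Real.exp (lam * τ) * ‖r‖ / (1 + lam) + Ch) * ρ y := by
        ring
    _ ≤ 1 * B₀ + (Real.exp (lam * T) * ‖r‖ / (1 + lam) + Ch) * Mρ := by
        refine add_le_add ?_ ?_
        · exact mul_le_mul hexp1 (hB₀ y) (mul_nonneg (abs_nonneg _) (hρpos y)) zero_le_one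
        · refine mul_le_mul (add_le_add ?_ le_rfl) (hMρ y) (hρpos y) ?_
          · gcongr
          · positivity
    _ = B₀ + Mρ * (Real.exp (lam * T) * ‖r‖ / (1 + lam) + Ch) := by ring

lemma auxU_diff {N : ℕ} (u₀ h : (Fin N → ℝ) → ℝ) (lam : ℝ) (hlam : 0 ≤ lam)
    (r₁ r₂ : BoundedContinuousFunction ((Fin N → ℝ) × ℝ) ℝ) (y : Fin N → ℝ) (t : ℝ) :
    |auxU u₀ h lam r₁ y t - auxU u₀ h lam r₂ y t| ≤
      Real.exp (lam * max t 0) * dist r₁ r₂ / (1 + lam) := by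
  set τ : ℝ := max t 0 with hτdef
  have hτ0 : (0:ℝ) ≤ τ := le_max_right _ _
  have hdiff : auxU u₀ h lam r₁ y t - auxU u₀ h lam r₂ y t =
      ∫ σ in (0:ℝ)..τ, Real.exp (σ - τ) * (Real.exp (lam * σ) * (r₁ (y, σ) - r₂ (y, σ))) := by
    unfold auxU
    rw [← hτdef]
    have hint : ∀ (r : BoundedContinuousFunction ((Fin N → ℝ) × ℝ) ℝ),
        IntervalIntegrable (fun σ => Real.exp (σ - τ) * (Real.exp (lam * σ) * r (y, σ) + h y))
          volume 0 τ := fun r =>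
      ((Real.continuous_exp.comp (continuous_id.sub continuous_const)).mul
        (((Real.continuous_exp.comp (continuous_const.mul continuous_id)).mul
          (r.continuous.comp (continuous_const.prodMk continuous_id))).add
          continuous_const)).intervalIntegrable 0 τ
    rw [show Real.exp (-τ) * u₀ y + (∫ σ in (0:ℝ)..τ, Real.exp (σ - τ) * (Real.exp (lam * σ) * r₁ (y, σ) + h y)) -
        (Real.exp (-τ) * u₀ y + ∫ σ in (0:ℝ)..τ, Real.exp (σ - τ) * (Real.exp (lam * σ) * r₂ (y, σ) + h y)) =
        (∫ σ in (0:ℝ)..τ, Real.exp (σ - τ) * (Real.exp (lam * σ) * r₁ (y, σ) + h y)) -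
        ∫ σ in (0:ℝ)..τ, Real.exp (σ - τ) * (Real.exp (lam * σ) * r₂ (y, σ) + h y) by ring]
    rw [← intervalIntegral.integral_sub (hint r₁) (hint r₂)]
    congr 1; funext σ; ring
  rw [hdiff]
  apply aux_est lam τ (dist r₁ r₂) hlam hτ0 dist_nonneg
  · exact (r₁.continuous.comp (continuous_const.prodMk continuous_id)).sub
      (r₂.continuous.comp (continuous_const.prodMk continuous_id))
  · intro σ
    rw [← Real.dist_eq]
    exact BoundedContinuousFunction.dist_coe_le_dist (y, σ)

lemma aux_contD {N : ℕ} (J : (Fin N → ℝ) → ℝ) (hJ : Integrable J)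
    (Ψ : (Fin N → ℝ) × ℝ → ℝ) (hΨ : Continuous Ψ)
    (hC : ∀ T : ℝ, 0 ≤ T → ∃ C, ∀ y s, s ∈ Set.Icc (0:ℝ) T → |Ψ (y, s)| ≤ C) :
    Continuous fun p : (Fin N → ℝ) × ℝ => ∫ z, J z * Ψ (p.1 - z, max p.2 0) := by
  rw [continuous_iff_continuousAt]
  intro p₀
  set T : ℝ := max p₀.2 0 + 1 with hT
  have hT0 : (0:ℝ) ≤ T := by positivity
  obtain ⟨C, hCb⟩ := hC T hT0
  set Ψc : (Fin N → ℝ) × ℝ → ℝ := fun q => Ψ (q.1, min (max q.2 0) T) with hΨc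
  have hΨcc : Continuous Ψc :=
    hΨ.comp (continuous_fst.prodMk ((continuous_snd.max continuous_const).min continuous_const))
  have hΨcb : ∀ q, |Ψc q| ≤ C := fun q =>
    hCb _ _ ⟨le_min (le_max_right _ _) hT0, min_le_right _ _⟩
  have hcont := aux_contC J hJ Ψc hΨcc C hΨcb
  have hev : ∀ᶠ p : (Fin N → ℝ) × ℝ in nhds p₀, max p.2 0 ≤ T := by
    have : ∀ᶠ p : (Fin N → ℝ) × ℝ in nhds p₀, p.2 < p₀.2 + 1 :=
      continuous_snd.continuousAt.eventually_lt continuousAt_const (by linarith)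
    filter_upwards [this] with p hp
    exact max_le (by linarith [le_max_left p₀.2 (0:ℝ)]) (by linarith [le_max_right p₀.2 (0:ℝ)])
  apply hcont.continuousAt.congr
  filter_upwards [hev] with p hp
  congr 1
  funext z
  rw [hΨc]
  simp only
  rw [min_eq_left hp]

lemma aux_conv_integrable {N : ℕ} (J : (Fin N → ℝ) → ℝ) (hJint : Integrable J)
    (g : (Fin N → ℝ) → ℝ) (hgm : AEStronglyMeasurable g volume) (C : ℝ)
    (hgC : ∀ z, |g z| ≤ C) : Integrable fun z => J z * g z := by
  refine Integrable.mono' (hJint.abs.mul_const C)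
    (hJint.aestronglyMeasurable.mul hgm) ?_
  filter_upwards with z
  rw [Real.norm_eq_abs, abs_mul]
  exact mul_le_mul_of_nonneg_left (hgC z) (abs_nonneg _)

lemma aux_conv_bound {N : ℕ} (J : (Fin N → ℝ) → ℝ) (hJint : Integrable J)
    (hJpos : ∀ x, 0 ≤ J x) (g : (Fin N → ℝ) → ℝ) (C : ℝ)
    (hgC : ∀ z, |g z| ≤ C) : |∫ z, J z * g z| ≤ (∫ z, J z) * C := by
  have h1 : |∫ z, J z * g z| ≤ ∫ z, |J z * g z| := by
    simpa only [Real.norm_eq_abs] using norm_integral_le_integral_norm (fun z => J z * g z)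
  refine h1.trans ?_
  have h2 : (∫ z, |J z * g z|) ≤ ∫ z, J z * C := by
    apply integral_mono_of_nonneg
    · filter_upwards with z; exact abs_nonneg _
    · exact hJint.mul_const C
    · filter_upwards with z
      rw [abs_mul, abs_of_nonneg (hJpos z)]
      exact mul_le_mul_of_nonneg_left (hgC z) (hJpos z)
  refine h2.trans_eq ?_
  exact integral_mul_const C J

noncomputable def auxPhi {N : ℕ} (J ρ u₀ h : (Fin N → ℝ) → ℝ) (f : ℝ → ℝ) (lam : ℝ)
    (r : BoundedContinuousFunction ((Fin N → ℝ) × ℝ) ℝ) (p : (Fin N → ℝ) × ℝ) : ℝ :=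
  Real.exp (-(lam * max p.2 0)) *
    ∫ z, J z * (f (auxU u₀ h lam r (p.1 - z) (max p.2 0)) * ρ (p.1 - z))


lemma aux_G_cont {N : ℕ} (J ρ : (Fin N → ℝ) → ℝ) (hJint : Integrable J)
    (hρcont : Continuous ρ) (hρpos : ∀ x, 0 ≤ ρ x)
    (f : ℝ → ℝ) (hfc : Continuous f) (w : (Fin N → ℝ) → ℝ → ℝ)
    (hw : ContinuousOn (fun p : (Fin N → ℝ) × ℝ => w p.1 p.2) (Set.univ ×ˢ Set.Ici (0:ℝ)))
    (T : ℝ) (hT : 0 ≤ T) (D : ℝ)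
    (hD : ∀ y s, s ∈ Set.Icc (0:ℝ) T → |f (w y s)| * ρ y ≤ D) (x : Fin N → ℝ) :
    Continuous fun σ : ℝ => ∫ y, J (x - y) * f (w y (min (max σ 0) T)) * ρ y := by
  have hcl : Continuous fun σ : ℝ => min (max σ 0) T :=
    (continuous_id.max continuous_const).min continuous_const
  have hclmem : ∀ σ : ℝ, min (max σ 0) T ∈ Set.Icc (0:ℝ) T :=
    fun σ => ⟨le_min (le_max_right _ _) hT, min_le_right _ _⟩
  apply continuous_of_dominated (bound := fun y => |J (x - y)| * D)
  · intro σ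
    have hsl : Continuous fun y => w y (min (max σ 0) T) := by
      apply hw.comp_continuous (continuous_id.prodMk continuous_const)
      intro y
      exact Set.mk_mem_prod (Set.mem_univ y) (hclmem σ).1
    exact (((hJint.comp_sub_left x).aestronglyMeasurable).mul
      ((hfc.comp hsl).aestronglyMeasurable)).mul hρcont.aestronglyMeasurable
  · intro σ
    filter_upwards with y
    rw [Real.norm_eq_abs, abs_mul, abs_mul, abs_of_nonneg (hρpos y), mul_assoc]
    exact mul_le_mul_of_nonneg_left (hD y _ (hclmem σ)) (abs_nonneg _)
  · exact (hJint.comp_sub_left x).abs.mul_const D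
  · filter_upwards with y
    have hws : Continuous fun σ : ℝ => w y (min (max σ 0) T) := by
      apply hw.comp_continuous (continuous_const.prodMk hcl)
      intro σ
      exact Set.mk_mem_prod (Set.mem_univ y) (hclmem σ).1
    exact (continuous_const.mul (hfc.comp hws)).mul continuous_const

lemma aux_exists {N : ℕ} (J ρ h : (Fin N → ℝ) → ℝ)
    (hJint : Integrable J) (hJpos : ∀ x, 0 ≤ J x)
    (hρcont : Continuous ρ) (hρpos : ∀ x, 0 ≤ ρ x)
    (Mρ : ℝ) (hMρ : ∀ x, ρ x ≤ Mρ)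
    (hhcont : Continuous h) (Ch : ℝ) (hCh : ∀ x, |h x| ≤ Ch)
    (f : ℝ → ℝ) (k : ℝ) (hk0 : 0 ≤ k) (hf : ∀ a b : ℝ, |f a - f b| ≤ k * |a - b|)
    (u₀ : (Fin N → ℝ) → ℝ) (hu₀c : Continuous u₀)
    (B₀ : ℝ) (hB₀ : ∀ x, |u₀ x| * ρ x ≤ B₀) :
    ∃ u : (Fin N → ℝ) → ℝ → ℝ, IsMildSolutionCrho J ρ h f u₀ u := by
  have hCh0 : 0 ≤ Ch := le_trans (abs_nonneg _) (hCh 0)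
  have hMρ0 : 0 ≤ Mρ := le_trans (hρpos 0) (hMρ 0)
  have hB₀0 : 0 ≤ B₀ := le_trans (mul_nonneg (abs_nonneg _) (hρpos 0)) (hB₀ 0)
  have hfc : Continuous f := by
    have : LipschitzWith (Real.toNNReal k) f := by
      apply LipschitzWith.of_dist_le_mul
      intro a b
      rw [Real.dist_eq, Real.dist_eq, Real.coe_toNNReal k hk0]
      exact hf a b
    exact this.continuous
  have hfb : ∀ a : ℝ, |f a| ≤ |f 0| + k * |a| := by
    intro a
    have h1 : |f a| - |f 0| ≤ |f a - f 0| := abs_sub_abs_le_abs_sub _ _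
    have h2 := hf a 0
    rw [sub_zero] at h2
    linarith
  set IJ : ℝ := ∫ z, J z with hIJdef
  have hIJ0 : 0 ≤ IJ := integral_nonneg hJpos
  set lam : ℝ := k * Mρ * IJ with hlamdef
  have hlam0 : 0 ≤ lam := by positivity
  have hopl : (0:ℝ) < 1 + lam := by linarith
  set Q : ℝ := |f 0| * Mρ + k * B₀ + k * Mρ * Ch with hQdef
  have hQ0 : 0 ≤ Q := by positivity
  -- Ψ bound
  have hΨb : ∀ (r : BoundedContinuousFunction ((Fin N → ℝ) × ℝ) ℝ) (T : ℝ), 0 ≤ T →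
      ∀ (y : Fin N → ℝ) (t : ℝ), max t 0 ≤ T →
      |f (auxU u₀ h lam r y t) * ρ y| ≤ Q + k * Mρ * (Real.exp (lam * T) * ‖r‖ / (1 + lam)) := by
    intro r T hT y t ht
    rw [abs_mul, abs_of_nonneg (hρpos y)]
    calc |f (auxU u₀ h lam r y t)| * ρ y
        ≤ (|f 0| + k * |auxU u₀ h lam r y t|) * ρ y :=
          mul_le_mul_of_nonneg_right (hfb _) (hρpos y)
      _ = |f 0| * ρ y + k * (|auxU u₀ h lam r y t| * ρ y) := by ring
      _ ≤ |f 0| * Mρ + k * (B₀ + Mρ * (Real.exp (lam * T) * ‖r‖ / (1 + lam) + Ch)) := by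
          refine add_le_add (mul_le_mul_of_nonneg_left (hMρ y) (abs_nonneg _)) ?_
          exact mul_le_mul_of_nonneg_left
            (auxU_bound u₀ h ρ hρpos Mρ hMρ B₀ hB₀ Ch hCh hCh0 lam hlam0 r T hT y t ht) hk0
      _ = Q + k * Mρ * (Real.exp (lam * T) * ‖r‖ / (1 + lam)) := by rw [hQdef]; ring
  -- integrand integrability and measurability
  have hUc : ∀ (r : BoundedContinuousFunction ((Fin N → ℝ) × ℝ) ℝ),
      Continuous fun p : (Fin N → ℝ) × ℝ => auxU u₀ h lam r p.1 p.2 :=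
    fun r => auxU_cont u₀ h hu₀c hhcont Ch hCh lam hlam0 r
  have hgc : ∀ (r : BoundedContinuousFunction ((Fin N → ℝ) × ℝ) ℝ) (x : Fin N → ℝ) (τ : ℝ),
      Continuous fun z => f (auxU u₀ h lam r (x - z) τ) * ρ (x - z) := by
    intro r x τ
    have h1 : Continuous fun z : Fin N → ℝ => (x - z, τ) :=
      (continuous_const.sub continuous_id).prodMk continuous_const
    exact ((hfc.comp ((hUc r).comp h1))).mul (hρcont.comp (continuous_const.sub continuous_id))
  have hint : ∀ (r : BoundedContinuousFunction ((Fin N → ℝ) × ℝ) ℝ) (x : Fin N → ℝ) (τ : ℝ),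
      0 ≤ τ → Integrable fun z => J z * (f (auxU u₀ h lam r (x - z) τ) * ρ (x - z)) := by
    intro r x τ hτ
    refine aux_conv_integrable J hJint _ (hgc r x τ).aestronglyMeasurable
      (Q + k * Mρ * (Real.exp (lam * τ) * ‖r‖ / (1 + lam))) ?_
    intro z
    exact hΨb r τ hτ (x - z) τ (by rw [max_eq_left hτ])
  -- continuity of auxPhi
  have hPhicont : ∀ r, Continuous (auxPhi J ρ u₀ h f lam r) := by
    intro r
    unfold auxPhi
    apply Continuous.mul
    · exact Real.continuous_exp.comp (continuous_const.mul (continuous_snd.max continuous_const)).neg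
    · apply aux_contD J hJint (Ψ := fun q : (Fin N → ℝ) × ℝ => f (auxU u₀ h lam r q.1 q.2) * ρ q.1)
      · exact (hfc.comp (hUc r)).mul (hρcont.comp continuous_fst)
      · intro T hT
        refine ⟨Q + k * Mρ * (Real.exp (lam * T) * ‖r‖ / (1 + lam)), ?_⟩
        intro y s hs
        exact hΨb r T hT y s (max_le hs.2 hT)
  -- bound for auxPhi
  have e2 : ∀ τ : ℝ, Real.exp (-(lam * τ)) * Real.exp (lam * τ) = 1 := by
    intro τ; rw [← Real.exp_add]; simp
  have hPhib : ∀ r p, |auxPhi J ρ u₀ h f lam r p| ≤ IJ * Q + IJ * (k * Mρ) * ‖r‖ / (1 + lam) := by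
    intro r p
    have hτ0 : (0:ℝ) ≤ max p.2 0 := le_max_right _ _
    unfold auxPhi
    rw [abs_mul, abs_of_nonneg (Real.exp_nonneg _)]
    have hconv := aux_conv_bound J hJint hJpos _
      (Q + k * Mρ * (Real.exp (lam * max p.2 0) * ‖r‖ / (1 + lam)))
      (fun z => hΨb r (max p.2 0) hτ0 (p.1 - z) (max p.2 0) (by rw [max_eq_left hτ0]))
    have e1 : Real.exp (-(lam * max p.2 0)) ≤ 1 :=
      Real.exp_le_one_iff.2 (by nlinarith)
    calc Real.exp (-(lam * max p.2 0)) * |∫ z, J z * (f (auxU u₀ h lam r (p.1 - z) (max p.2 0)) * ρ (p.1 - z))|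
        ≤ Real.exp (-(lam * max p.2 0)) *
          (IJ * (Q + k * Mρ * (Real.exp (lam * max p.2 0) * ‖r‖ / (1 + lam)))) :=
          mul_le_mul_of_nonneg_left hconv (Real.exp_nonneg _)
      _ = Real.exp (-(lam * max p.2 0)) * (IJ * Q) +
          (Real.exp (-(lam * max p.2 0)) * Real.exp (lam * max p.2 0)) *
            (IJ * (k * Mρ) * ‖r‖ / (1 + lam)) := by ring
      _ ≤ 1 * (IJ * Q) + 1 * (IJ * (k * Mρ) * ‖r‖ / (1 + lam)) := by
          rw [e2]
          refine add_le_add (mul_le_mul_of_nonneg_right e1 (by positivity)) le_rfl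
      _ = IJ * Q + IJ * (k * Mρ) * ‖r‖ / (1 + lam) := by ring
  -- the map Φ
  set Φ : BoundedContinuousFunction ((Fin N → ℝ) × ℝ) ℝ →
      BoundedContinuousFunction ((Fin N → ℝ) × ℝ) ℝ :=
    fun r => BoundedContinuousFunction.ofNormedAddCommGroup (auxPhi J ρ u₀ h f lam r)
      (hPhicont r) (IJ * Q + IJ * (k * Mρ) * ‖r‖ / (1 + lam))
      (fun p => by rw [Real.norm_eq_abs]; exact hPhib r p) with hΦdef
  have hΦcoe : ∀ r p, Φ r p = auxPhi J ρ u₀ h f lam r p := by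
    intro r p; rw [hΦdef]; rfl
  -- contraction estimate
  have hlip : ∀ r₁ r₂ p, |auxPhi J ρ u₀ h f lam r₁ p - auxPhi J ρ u₀ h f lam r₂ p| ≤
      (lam / (1 + lam)) * dist r₁ r₂ := by
    intro r₁ r₂ p
    have hτ0 : (0:ℝ) ≤ max p.2 0 := le_max_right _ _
    unfold auxPhi
    rw [← mul_sub, abs_mul, abs_of_nonneg (Real.exp_nonneg _),
      ← integral_sub (hint r₁ p.1 _ hτ0) (hint r₂ p.1 _ hτ0)]
    have hrw : (fun z => J z * (f (auxU u₀ h lam r₁ (p.1 - z) (max p.2 0)) * ρ (p.1 - z)) -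
        J z * (f (auxU u₀ h lam r₂ (p.1 - z) (max p.2 0)) * ρ (p.1 - z))) =
        fun z => J z * ((f (auxU u₀ h lam r₁ (p.1 - z) (max p.2 0)) -
          f (auxU u₀ h lam r₂ (p.1 - z) (max p.2 0))) * ρ (p.1 - z)) := by
      funext z; ring
    rw [hrw]
    have hptw : ∀ z, |(f (auxU u₀ h lam r₁ (p.1 - z) (max p.2 0)) -
        f (auxU u₀ h lam r₂ (p.1 - z) (max p.2 0))) * ρ (p.1 - z)| ≤
        k * (Real.exp (lam * max p.2 0) * dist r₁ r₂ / (1 + lam)) * Mρ := by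
      intro z
      rw [abs_mul, abs_of_nonneg (hρpos _)]
      have h1 : |f (auxU u₀ h lam r₁ (p.1 - z) (max p.2 0)) -
          f (auxU u₀ h lam r₂ (p.1 - z) (max p.2 0))| ≤
          k * (Real.exp (lam * max p.2 0) * dist r₁ r₂ / (1 + lam)) := by
        refine (hf _ _).trans ?_
        refine mul_le_mul_of_nonneg_left ?_ hk0
        have := auxU_diff u₀ h lam hlam0 r₁ r₂ (p.1 - z) (max p.2 0)
        rwa [max_eq_left hτ0] at this
      refine mul_le_mul h1 (hMρ _) (hρpos _) ?_
      positivity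
    have hconv := aux_conv_bound J hJint hJpos _ _ hptw
    calc Real.exp (-(lam * max p.2 0)) * |∫ z, J z * ((f (auxU u₀ h lam r₁ (p.1 - z) (max p.2 0)) -
          f (auxU u₀ h lam r₂ (p.1 - z) (max p.2 0))) * ρ (p.1 - z))|
        ≤ Real.exp (-(lam * max p.2 0)) *
          (IJ * (k * (Real.exp (lam * max p.2 0) * dist r₁ r₂ / (1 + lam)) * Mρ)) :=
          mul_le_mul_of_nonneg_left hconv (Real.exp_nonneg _)
      _ = (Real.exp (-(lam * max p.2 0)) * Real.exp (lam * max p.2 0)) *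
          ((k * Mρ * IJ) * dist r₁ r₂ / (1 + lam)) := by ring
      _ = (lam / (1 + lam)) * dist r₁ r₂ := by rw [e2, hlamdef]; ring
  -- contraction
  have hc1 : lam / (1 + lam) < 1 := (div_lt_one hopl).2 (by linarith)
  have hcnn : 0 ≤ lam / (1 + lam) := by positivity
  have hK : LipschitzWith (Real.toNNReal (lam / (1 + lam))) Φ := by
    apply LipschitzWith.of_dist_le_mul
    intro r₁ r₂
    rw [Real.coe_toNNReal _ hcnn]
    refine (BoundedContinuousFunction.dist_le (by positivity)).2 ?_
    intro p
    rw [Real.dist_eq, hΦcoe, hΦcoe]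
    exact hlip r₁ r₂ p
  have hcontr : ContractingWith (Real.toNNReal (lam / (1 + lam))) Φ := by
    constructor
    · rw [← NNReal.coe_lt_coe, Real.coe_toNNReal _ hcnn, NNReal.coe_one]
      exact hc1
    · exact hK
  set r := ContractingWith.fixedPoint Φ hcontr with hrdef
  have hfix : Φ r = r := hcontr.fixedPoint_isFixedPt
  refine ⟨auxU u₀ h lam r, (hUc r).continuousOn, fun x => auxU_zero u₀ h lam r x, ?_, ?_⟩
  · intro T hT
    refine ⟨B₀ + Mρ * (Real.exp (lam * T) * ‖r‖ / (1 + lam) + Ch), ?_⟩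
    intro t ht x
    exact auxU_bound u₀ h ρ hρpos Mρ hMρ B₀ hB₀ Ch hCh hCh0 lam hlam0 r T hT.le x t
      (max_le ht.2 hT.le)
  · intro x t ht
    have hτ : max t 0 = t := max_eq_left ht
    have hVOC : auxU u₀ h lam r x t = Real.exp (-t) * u₀ x +
        ∫ σ in (0:ℝ)..t, Real.exp (σ - t) * (Real.exp (lam * σ) * r (x, σ) + h x) := by
      unfold auxU
      rw [hτ]
    show auxU u₀ h lam r x t = _
    rw [hVOC]
    congr 1
    apply intervalIntegral.integral_congr
    intro σ hσ
    dsimp only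
    rw [Set.uIcc_of_le ht] at hσ
    have hσ0 : 0 ≤ σ := hσ.1
    have hστ : max σ 0 = σ := max_eq_left hσ0
    have hcv : convW J ρ (fun y => f (auxU u₀ h lam r y σ)) x =
        ∫ z, J z * (f (auxU u₀ h lam r (x - z) σ) * ρ (x - z)) := by
      unfold convW
      rw [aux_convW_eq]
      congr 1; funext z; ring
    have hr : r (x, σ) = auxPhi J ρ u₀ h f lam r (x, σ) := by
      conv_lhs => rw [← hfix]
      exact hΦcoe r (x, σ)
    have hkey : Real.exp (lam * σ) * r (x, σ) =
        convW J ρ (fun y => f (auxU u₀ h lam r y σ)) x := by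
      rw [hcv, hr]
      unfold auxPhi
      simp only [hστ]
      rw [← mul_assoc, ← Real.exp_add]
      simp
    rw [hkey]

lemma aux_unique {N : ℕ} (J ρ h : (Fin N → ℝ) → ℝ)
    (hJint : Integrable J) (hJpos : ∀ x, 0 ≤ J x)
    (hρcont : Continuous ρ) (hρpos : ∀ x, 0 ≤ ρ x)
    (Mρ : ℝ) (hMρ : ∀ x, ρ x ≤ Mρ)
    (f : ℝ → ℝ) (k : ℝ) (hk0 : 0 ≤ k) (hf : ∀ a b : ℝ, |f a - f b| ≤ k * |a - b|)
    (u₀ : (Fin N → ℝ) → ℝ)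
    (u v : (Fin N → ℝ) → ℝ → ℝ)
    (hu : IsMildSolutionCrho J ρ h f u₀ u) (hv : IsMildSolutionCrho J ρ h f u₀ v) :
    ∀ x, ∀ t : ℝ, 0 ≤ t → u x t = v x t := by
  have hMρ0 : 0 ≤ Mρ := le_trans (hρpos 0) (hMρ 0)
  have hfc : Continuous f := by
    have : LipschitzWith (Real.toNNReal k) f := by
      apply LipschitzWith.of_dist_le_mul
      intro a b
      rw [Real.dist_eq, Real.dist_eq, Real.coe_toNNReal k hk0]
      exact hf a b
    exact this.continuous
  have hfb : ∀ a : ℝ, |f a| ≤ |f 0| + k * |a| := by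
    intro a
    have h1 : |f a| - |f 0| ≤ |f a - f 0| := abs_sub_abs_le_abs_sub _ _
    have h2 := hf a 0
    rw [sub_zero] at h2
    linarith
  set IJ : ℝ := ∫ z, J z with hIJdef
  have hIJ0 : 0 ≤ IJ := integral_nonneg hJpos
  intro x₀ t₀ ht₀
  set T : ℝ := t₀ + 1 with hTdef
  have hT0 : (0:ℝ) < T := by linarith
  obtain ⟨Cu, hCuB⟩ := hu.2.2.1 T hT0
  obtain ⟨Cv, hCvB⟩ := hv.2.2.1 T hT0
  have hCu0 : 0 ≤ Cu :=
    le_trans (mul_nonneg (abs_nonneg _) (hρpos x₀)) (hCuB 0 ⟨le_rfl, hT0.le⟩ x₀)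
  have hCv0 : 0 ≤ Cv :=
    le_trans (mul_nonneg (abs_nonneg _) (hρpos x₀)) (hCvB 0 ⟨le_rfl, hT0.le⟩ x₀)
  set B : ℝ := Cu + Cv with hBdef
  set K : ℝ := k * Mρ * IJ with hKdef
  have hK0 : 0 ≤ K := by positivity
  -- weighted bounds for slices
  have hfwb : ∀ (w : (Fin N → ℝ) → ℝ → ℝ) (Cw : ℝ),
      (∀ t ∈ Set.Icc (0:ℝ) T, ∀ x, |w x t| * ρ x ≤ Cw) →
      ∀ y s, s ∈ Set.Icc (0:ℝ) T → |f (w y s)| * ρ y ≤ |f 0| * Mρ + k * Cw := by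
    intro w Cw hCw y s hs
    calc |f (w y s)| * ρ y ≤ (|f 0| + k * |w y s|) * ρ y :=
          mul_le_mul_of_nonneg_right (hfb _) (hρpos y)
      _ = |f 0| * ρ y + k * (|w y s| * ρ y) := by ring
      _ ≤ |f 0| * Mρ + k * Cw := add_le_add (mul_le_mul_of_nonneg_left (hMρ y) (abs_nonneg _))
          (mul_le_mul_of_nonneg_left (hCw s hs y) hk0)
  -- slice continuity
  have hsl : ∀ (w : (Fin N → ℝ) → ℝ → ℝ),
      ContinuousOn (fun p : (Fin N → ℝ) × ℝ => w p.1 p.2) (Set.univ ×ˢ Set.Ici (0:ℝ)) →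
      ∀ s : ℝ, 0 ≤ s → Continuous fun y => w y s := by
    intro w hw s hs
    apply hw.comp_continuous (continuous_id.prodMk continuous_const)
    intro y
    exact Set.mk_mem_prod (Set.mem_univ y) hs
  -- convW in z-form
  have hzform : ∀ (w : (Fin N → ℝ) → ℝ → ℝ) (s : ℝ) (x : Fin N → ℝ),
      convW J ρ (fun y => f (w y s)) x = ∫ z, J z * (f (w (x - z) s) * ρ (x - z)) := by
    intro w s x
    unfold convW
    rw [aux_convW_eq]
    congr 1; funext z; ring
  -- integrability of z-form integrand
  have hzint : ∀ (w : (Fin N → ℝ) → ℝ → ℝ) (Cw : ℝ),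
      ContinuousOn (fun p : (Fin N → ℝ) × ℝ => w p.1 p.2) (Set.univ ×ˢ Set.Ici (0:ℝ)) →
      (∀ t ∈ Set.Icc (0:ℝ) T, ∀ x, |w x t| * ρ x ≤ Cw) →
      ∀ s, s ∈ Set.Icc (0:ℝ) T → ∀ x : Fin N → ℝ,
      Integrable fun z => J z * (f (w (x - z) s) * ρ (x - z)) := by
    intro w Cw hw hCw s hs x
    have hgcont : Continuous fun z => f (w (x - z) s) * ρ (x - z) :=
      ((hfc.comp ((hsl w hw s hs.1).comp (continuous_const.sub continuous_id)))).mul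
        (hρcont.comp (continuous_const.sub continuous_id))
    refine aux_conv_integrable J hJint _ hgcont.aestronglyMeasurable (|f 0| * Mρ + k * Cw) ?_
    intro z
    rw [abs_mul, abs_of_nonneg (hρpos _)]
    exact hfwb w Cw hCw (x - z) s hs
  -- the clamped conv functions are continuous in time
  have hGuc : ∀ x : Fin N → ℝ,
      Continuous fun σ : ℝ => ∫ y, J (x - y) * f (u y (min (max σ 0) T)) * ρ y :=
    fun x => aux_G_cont J ρ hJint hρcont hρpos f hfc u hu.1 T hT0.le _
      (hfwb u Cu hCuB) x
  have hGvc : ∀ x : Fin N → ℝ,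
      Continuous fun σ : ℝ => ∫ y, J (x - y) * f (v y (min (max σ 0) T)) * ρ y :=
    fun x => aux_G_cont J ρ hJint hρcont hρpos f hfc v hv.1 T hT0.le _
      (hfwb v Cv hCvB) x
  -- clamped = unclamped on [0,T]
  have hclamp : ∀ s ∈ Set.Icc (0:ℝ) T, min (max s 0) T = s := by
    intro s hs
    rw [max_eq_left hs.1, min_eq_left hs.2]
  have hGeq : ∀ (w : (Fin N → ℝ) → ℝ → ℝ) (s : ℝ), s ∈ Set.Icc (0:ℝ) T → ∀ x : Fin N → ℝ,
      (∫ y, J (x - y) * f (w y (min (max s 0) T)) * ρ y) = convW J ρ (fun y => f (w y s)) x := by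
    intro w s hs x
    unfold convW
    rw [hclamp s hs]
  -- rewritten VOC on [0,T]
  have hVOCG : ∀ (w : (Fin N → ℝ) → ℝ → ℝ),
      IsMildSolutionCrho J ρ h f u₀ w →
      ∀ x, ∀ s ∈ Set.Icc (0:ℝ) T, w x s = Real.exp (-s) * u₀ x +
        ∫ σ in (0:ℝ)..s, Real.exp (σ - s) *
          ((∫ y, J (x - y) * f (w y (min (max σ 0) T)) * ρ y) + h x) := by
    intro w hw x s hs
    rw [hw.2.2.2 x s hs.1]
    congr 1
    apply intervalIntegral.integral_congr
    intro σ hσ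
    dsimp only
    rw [Set.uIcc_of_le hs.1] at hσ
    rw [hGeq w σ ⟨hσ.1, hσ.2.trans hs.2⟩ x]
  -- main induction
  have main : ∀ n : ℕ, ∀ s ∈ Set.Icc (0:ℝ) T, ∀ x,
      |u x s - v x s| * ρ x ≤ B * K ^ n * s ^ n / n.factorial := by
    intro n
    induction n with
    | zero =>
      intro s hs x
      simp only [pow_zero, Nat.factorial_zero, Nat.cast_one, mul_one, div_one]
      calc |u x s - v x s| * ρ x ≤ (|u x s| + |v x s|) * ρ x :=
            mul_le_mul_of_nonneg_right (abs_sub _ _) (hρpos x)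
        _ = |u x s| * ρ x + |v x s| * ρ x := by ring
        _ ≤ Cu + Cv := add_le_add (hCuB s hs x) (hCvB s hs x)
        _ = B := hBdef.symm
    | succ n ih =>
      intro s hs x
      -- bound on difference of conv terms
      have hGdiff : ∀ σ, σ ∈ Set.Icc (0:ℝ) T → ∀ x' : Fin N → ℝ,
          |(∫ y, J (x' - y) * f (u y (min (max σ 0) T)) * ρ y) -
            ∫ y, J (x' - y) * f (v y (min (max σ 0) T)) * ρ y| ≤
          IJ * (k * (B * K ^ n * σ ^ n / n.factorial)) := by
        intro σ hσ x'
        rw [hGeq u σ hσ x', hGeq v σ hσ x', hzform u σ x', hzform v σ x',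
          ← integral_sub (hzint u Cu hu.1 hCuB σ hσ x') (hzint v Cv hv.1 hCvB σ hσ x')]
        have hrw : (fun z => J z * (f (u (x' - z) σ) * ρ (x' - z)) -
            J z * (f (v (x' - z) σ) * ρ (x' - z))) =
            fun z => J z * ((f (u (x' - z) σ) - f (v (x' - z) σ)) * ρ (x' - z)) := by
          funext z; ring
        rw [hrw]
        apply aux_conv_bound J hJint hJpos
        intro z
        rw [abs_mul, abs_of_nonneg (hρpos _)]
        calc |f (u (x' - z) σ) - f (v (x' - z) σ)| * ρ (x' - z)
            ≤ (k * |u (x' - z) σ - v (x' - z) σ|) * ρ (x' - z) :=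
              mul_le_mul_of_nonneg_right (hf _ _) (hρpos _)
          _ = k * (|u (x' - z) σ - v (x' - z) σ| * ρ (x' - z)) := by ring
          _ ≤ k * (B * K ^ n * σ ^ n / n.factorial) :=
              mul_le_mul_of_nonneg_left (ih σ hσ (x' - z)) hk0
      -- difference via VOC
      have hdiff : u x s - v x s =
          ∫ σ in (0:ℝ)..s, Real.exp (σ - s) *
            ((∫ y, J (x - y) * f (u y (min (max σ 0) T)) * ρ y) -
             ∫ y, J (x - y) * f (v y (min (max σ 0) T)) * ρ y) := by
        rw [hVOCG u hu x s hs, hVOCG v hv x s hs]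
        have hiu : IntervalIntegrable (fun σ => Real.exp (σ - s) *
            ((∫ y, J (x - y) * f (u y (min (max σ 0) T)) * ρ y) + h x)) volume 0 s :=
          ((Real.continuous_exp.comp (continuous_id.sub continuous_const)).mul
            ((hGuc x).add continuous_const)).intervalIntegrable 0 s
        have hiv : IntervalIntegrable (fun σ => Real.exp (σ - s) *
            ((∫ y, J (x - y) * f (v y (min (max σ 0) T)) * ρ y) + h x)) volume 0 s :=
          ((Real.continuous_exp.comp (continuous_id.sub continuous_const)).mul
            ((hGvc x).add continuous_const)).intervalIntegrable 0 s
        rw [show Real.exp (-s) * u₀ x + (∫ σ in (0:ℝ)..s, Real.exp (σ - s) *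
            ((∫ y, J (x - y) * f (u y (min (max σ 0) T)) * ρ y) + h x)) -
            (Real.exp (-s) * u₀ x + ∫ σ in (0:ℝ)..s, Real.exp (σ - s) *
            ((∫ y, J (x - y) * f (v y (min (max σ 0) T)) * ρ y) + h x)) =
            (∫ σ in (0:ℝ)..s, Real.exp (σ - s) *
            ((∫ y, J (x - y) * f (u y (min (max σ 0) T)) * ρ y) + h x)) -
            ∫ σ in (0:ℝ)..s, Real.exp (σ - s) *
            ((∫ y, J (x - y) * f (v y (min (max σ 0) T)) * ρ y) + h x) by ring]
        rw [← intervalIntegral.integral_sub hiu hiv]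
        congr 1; funext σ; ring
      have hest : |u x s - v x s| ≤ IJ * k * B * K ^ n / n.factorial * (s ^ (n+1) / (n+1)) := by
        rw [hdiff]
        have hb : |∫ σ in (0:ℝ)..s, Real.exp (σ - s) *
            ((∫ y, J (x - y) * f (u y (min (max σ 0) T)) * ρ y) -
             ∫ y, J (x - y) * f (v y (min (max σ 0) T)) * ρ y)| ≤
            |∫ σ in (0:ℝ)..s, IJ * k * B * K ^ n / n.factorial * σ ^ n| := by
          rw [← Real.norm_eq_abs]
          apply intervalIntegral.norm_integral_le_abs_of_norm_le
          · rw [Set.uIoc_of_le hs.1]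
            filter_upwards [ae_restrict_mem measurableSet_Ioc] with σ hσ
            have hσT : σ ∈ Set.Icc (0:ℝ) T := ⟨hσ.1.le, hσ.2.trans hs.2⟩
            rw [Real.norm_eq_abs, abs_mul, abs_of_nonneg (Real.exp_nonneg _)]
            have he1 : Real.exp (σ - s) ≤ 1 := Real.exp_le_one_iff.2 (by linarith [hσ.2])
            calc Real.exp (σ - s) * |(∫ y, J (x - y) * f (u y (min (max σ 0) T)) * ρ y) -
                  ∫ y, J (x - y) * f (v y (min (max σ 0) T)) * ρ y|
                ≤ 1 * (IJ * (k * (B * K ^ n * σ ^ n / n.factorial))) :=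
                  mul_le_mul he1 (hGdiff σ hσT x) (abs_nonneg _) zero_le_one
              _ = IJ * k * B * K ^ n / n.factorial * σ ^ n := by ring
          · exact ((continuous_const).mul (continuous_pow n)).intervalIntegrable 0 s
        refine hb.trans ?_
        rw [intervalIntegral.integral_const_mul, integral_pow]
        rw [abs_mul]
        rw [abs_of_nonneg (by positivity : (0:ℝ) ≤ IJ * k * B * K ^ n / n.factorial)]
        apply mul_le_mul_of_nonneg_left _ (by positivity)
        rw [zero_pow (Nat.succ_ne_zero n), sub_zero]
        rw [abs_of_nonneg (div_nonneg (pow_nonneg hs.1 _) (by positivity))]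
      have hfact : ((n+1 : ℕ).factorial : ℝ) = (n+1 : ℝ) * (n.factorial : ℝ) := by
        rw [Nat.factorial_succ]
        push_cast
        ring
      calc |u x s - v x s| * ρ x
          ≤ (IJ * k * B * K ^ n / n.factorial * (s ^ (n+1) / (n+1))) * Mρ := by
            apply mul_le_mul hest (hMρ x) (hρpos x)
            exact mul_nonneg (by positivity)
              (div_nonneg (pow_nonneg hs.1 _) (by positivity))
        _ = B * K ^ (n+1) * s ^ (n+1) / ((n+1 : ℕ).factorial : ℝ) := by
            rw [hfact, pow_succ, hKdef]
            field_simp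
            ring
  -- limit: weighted difference is zero on [0,T]
  have hzero : ∀ s ∈ Set.Icc (0:ℝ) T, ∀ x, |u x s - v x s| * ρ x = 0 := by
    intro s hs x
    have hle : ∀ n : ℕ, |u x s - v x s| * ρ x ≤ B * ((K * s) ^ n / n.factorial) := by
      intro n
      refine (main n s hs x).trans_eq ?_
      rw [mul_pow]
      ring
    have htend : Filter.Tendsto (fun n : ℕ => B * ((K * s) ^ n / n.factorial))
        Filter.atTop (nhds 0) := by
      have := (FloorSemiring.tendsto_pow_div_factorial_atTop (K * s)).const_mul B
      simpa using this
    have := ge_of_tendsto' htend hle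
    have hnn : 0 ≤ |u x s - v x s| * ρ x := mul_nonneg (abs_nonneg _) (hρpos x)
    linarith
  -- conv terms agree
  have hcveq : ∀ s ∈ Set.Icc (0:ℝ) T, ∀ x : Fin N → ℝ,
      convW J ρ (fun y => f (u y s)) x = convW J ρ (fun y => f (v y s)) x := by
    intro s hs x
    unfold convW
    congr 1
    funext y
    rcases eq_or_ne (ρ y) 0 with hy | hy
    · rw [hy, mul_zero, mul_zero]
    · have h1 : |u y s - v y s| = 0 := by
        have := hzero s hs y
        rcases mul_eq_zero.1 this with h | h
        · exact h
        · exact absurd h hy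
      have h2 : u y s = v y s := by
        rw [abs_eq_zero] at h1
        linarith [sub_eq_zero.1 h1]
      show J (x - y) * f (u y s) * ρ y = J (x - y) * f (v y s) * ρ y
      rw [h2]
  -- conclude
  rw [hu.2.2.2 x₀ t₀ ht₀, hv.2.2.2 x₀ t₀ ht₀]
  congr 1
  apply intervalIntegral.integral_congr
  intro σ hσ
  dsimp only
  rw [Set.uIcc_of_le ht₀] at hσ
  rw [hcveq σ ⟨hσ.1, by linarith [hσ.2]⟩ x₀]

/-- if `f` is globally Lipschitz, the Cauchy problem for
`∂_t u = -u + J *_ρ (f∘u) + h` is well posed in `C_ρ(ℝ^N)` with globally defined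
solutions: for every continuous `u₀` with `‖u₀‖_ρ < ∞` there is a unique globally
defined mild solution. -/
theorem cauchy_problem_well_posed_Crho {N : ℕ} (hN : 1 ≤ N)
    (J ρ h : (Fin N → ℝ) → ℝ)
    (hJint : Integrable J) (hJpos : ∀ x, 0 ≤ J x)
    (hρcont : Continuous ρ) (hρpos : ∀ x, 0 ≤ ρ x)
    (hρbdd : BddAbove (Set.range ρ)) (hρint : Integrable ρ)
    (hhcont : Continuous h) (hhbdd : ∃ C, ∀ x, |h x| ≤ C)
    (f : ℝ → ℝ) (k : ℝ) (hf : ∀ a b : ℝ, |f a - f b| ≤ k * |a - b|)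
    (u₀ : (Fin N → ℝ) → ℝ) (hu₀c : Continuous u₀)
    (hu₀b : BddAbove (Set.range fun x => |u₀ x| * ρ x)) :
    (∃ u : (Fin N → ℝ) → ℝ → ℝ, IsMildSolutionCrho J ρ h f u₀ u) ∧
    (∀ u v : (Fin N → ℝ) → ℝ → ℝ,
      IsMildSolutionCrho J ρ h f u₀ u → IsMildSolutionCrho J ρ h f u₀ v →
      ∀ x, ∀ t : ℝ, 0 ≤ t → u x t = v x t) := by
  obtain ⟨Mρ, hMρ'⟩ := hρbdd
  have hMρ : ∀ x, ρ x ≤ Mρ := fun x => hMρ' ⟨x, rfl⟩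
  obtain ⟨B₀, hB₀'⟩ := hu₀b
  have hB₀ : ∀ x, |u₀ x| * ρ x ≤ B₀ := fun x => hB₀' ⟨x, rfl⟩
  obtain ⟨Ch, hCh⟩ := hhbdd
  have hk0 : 0 ≤ k := by
    have h1 := hf 0 1
    rw [show |(0:ℝ) - 1| = 1 by norm_num, mul_one] at h1
    exact le_trans (abs_nonneg _) h1
  constructor
  · exact aux_exists J ρ h hJint hJpos hρcont hρpos Mρ hMρ hhcont Ch hCh f k hk0 hf u₀ hu₀c B₀ hB₀
  · intro u v hu hv
    exact aux_unique J ρ h hJint hJpos hρcont hρpos Mρ hMρ f k hk0 hf u₀ u v hu hv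
end

section
/- Suppose ρ : ℝ^N → ℝ is continuous, nonnegative, bounded, and tends to 0 as ‖x‖ → ∞. Then for every R > 0 the set { x ↦ u(x)·ρ(x) : u ∈ C¹(ℝ^N, ℝ), ‖u‖_∞ ≤ R and ‖Du(x)‖ ≤ R for all x } is totally bounded in the space of bounded continuous functions ℝ^N → ℝ with the supremum metric; i.e. the inclusion of C_b¹(ℝ^N) into C_ρ(ℝ^N) is a compact map. -/
open MeasureTheory Real BoundedContinuousFunction

/-- if `ρ` is continuous, nonnegative, bounded and tends to `0` at
infinity, then for each `R > 0` the set of products `u·ρ`, where `u` ranges over `C¹`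
functions with `‖u‖_∞ ≤ R` and `‖Du‖_∞ ≤ R`, is totally bounded in the sup metric;
i.e. the inclusion `C_b¹(ℝ^N) ↪ C_ρ(ℝ^N)` is compact. -/
theorem inclusion_Cb1_Crho_compact {N : ℕ} (hN : 1 ≤ N)
    (ρ : (Fin N → ℝ) → ℝ)
    (hρcont : Continuous ρ) (hρpos : ∀ x, 0 ≤ ρ x)
    (hρbdd : BddAbove (Set.range ρ))
    (hρzero : Filter.Tendsto ρ (Filter.cocompact (Fin N → ℝ)) (nhds 0))
    (R : ℝ) (hR : 0 < R) :
    TotallyBounded { w : (Fin N → ℝ) →ᵇ ℝ | ∃ u : (Fin N → ℝ) → ℝ,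
      ContDiff ℝ 1 u ∧ (∀ x, |u x| ≤ R) ∧ (∀ x, ‖fderiv ℝ u x‖ ≤ R) ∧
      ∀ x, w x = u x * ρ x } := by
  classical
  set s : Set ((Fin N → ℝ) →ᵇ ℝ) := { w : (Fin N → ℝ) →ᵇ ℝ | ∃ u : (Fin N → ℝ) → ℝ,
      ContDiff ℝ 1 u ∧ (∀ x, |u x| ≤ R) ∧ (∀ x, ‖fderiv ℝ u x‖ ≤ R) ∧
      ∀ x, w x = u x * ρ x } with hs
  obtain ⟨M, hM⟩ := hρbdd
  set M1 : ℝ := max M 1 with hM1def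
  have hM1 : ∀ x, ρ x ≤ M1 := fun x => le_trans (hM (Set.mem_range_self x)) (le_max_left _ _)
  have hM1one : (1 : ℝ) ≤ M1 := le_max_right _ _
  have hM1pos : (0 : ℝ) < M1 := lt_of_lt_of_le one_pos hM1one
  apply Metric.totallyBounded_of_finite_discretization
  intro ε hε
  set ε₁ : ℝ := ε / (8 * (R + 1)) with hε₁def
  have hε₁ : 0 < ε₁ := by positivity
  -- compact set outside of which ρ is small
  have hsmall : {x : (Fin N → ℝ) | ρ x < ε₁} ∈ Filter.cocompact (Fin N → ℝ) := by
    have : Metric.ball (0 : ℝ) ε₁ ∈ nhds (0 : ℝ) := Metric.ball_mem_nhds _ hε₁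
    filter_upwards [hρzero this] with x hx
    have : |ρ x| < ε₁ := by simpa [Real.dist_eq] using hx
    exact lt_of_le_of_lt (le_abs_self _) this
  obtain ⟨K, hKc, hKsub⟩ := Filter.mem_cocompact.mp hsmall
  obtain ⟨r, hr0, hKr⟩ : ∃ r : ℝ, 0 ≤ r ∧ K ⊆ Metric.closedBall 0 r := by
    obtain ⟨r, hKr⟩ := hKc.isBounded.subset_closedBall (0 : (Fin N → ℝ))
    exact ⟨max r 0, le_max_right _ _,
      hKr.trans (Metric.closedBall_subset_closedBall (le_max_left _ _))⟩
  -- uniform continuity of ρ on an enlarged ball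
  have hball : IsCompact (Metric.closedBall (0 : (Fin N → ℝ)) (r + 1)) := isCompact_closedBall _ _
  have huc : UniformContinuousOn ρ (Metric.closedBall (0 : (Fin N → ℝ)) (r + 1)) :=
    hball.uniformContinuousOn_of_continuous hρcont.continuousOn
  obtain ⟨δ₀, hδ₀, hδ₀uc⟩ := Metric.uniformContinuousOn_iff.mp huc ε₁ hε₁
  set δ : ℝ := min δ₀ (min 1 (ε / (8 * (R + 1) * M1))) with hδdef
  have hδpos : 0 < δ := by
    apply lt_min hδ₀
    apply lt_min one_pos
    positivity
  have hδ1 : δ ≤ 1 := (min_le_right _ _).trans (min_le_left _ _)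
  have hδsmall : δ ≤ ε / (8 * (R + 1) * M1) := (min_le_right _ _).trans (min_le_right _ _)
  -- finite δ-net of the ball in E
  obtain ⟨T, hTfin, hTcov⟩ := Metric.totallyBounded_iff.mp
    (isCompact_closedBall (0 : (Fin N → ℝ)) r).totallyBounded δ hδpos
  -- finite ε₁-net of the interval of values
  obtain ⟨V, hVfin, hVcov⟩ := Metric.totallyBounded_iff.mp
    (isCompact_closedBall (0 : ℝ) (R * M1)).totallyBounded ε₁ hε₁
  haveI : Fintype T := hTfin.fintype
  haveI : Fintype V := hVfin.fintype
  -- values of elements of s lie in the ball of radius R * M1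
  have hval : ∀ w : s, ∀ x : (Fin N → ℝ), (w : (Fin N → ℝ) →ᵇ ℝ) x ∈ Metric.closedBall (0 : ℝ) (R * M1) := by
    rintro ⟨w, u, hu, huR, huD, hw⟩ x
    simp only [Metric.mem_closedBall, Real.dist_eq, sub_zero]
    rw [hw x, abs_mul, abs_of_nonneg (hρpos x)]
    exact mul_le_mul (huR x) (hM1 x) (hρpos x) hR.le
  have key : ∀ (w : s) (t : T), ∃ v ∈ V, dist ((w : (Fin N → ℝ) →ᵇ ℝ) (t : (Fin N → ℝ))) v < ε₁ := by
    intro w t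
    have := hVcov (hval w t)
    simpa using this
  choose Fv hFv1 hFv2 using key
  refine ⟨T → V, inferInstance, fun w t => ⟨Fv w t, hFv1 w t⟩, ?_⟩
  rintro w₁ w₂ hF
  -- from equal discretizations, values at net points are 2ε₁-close
  have hnet : ∀ t : T, dist ((w₁ : (Fin N → ℝ) →ᵇ ℝ) (t : (Fin N → ℝ))) ((w₂ : (Fin N → ℝ) →ᵇ ℝ) (t : (Fin N → ℝ))) ≤ 2 * ε₁ := by
    intro t
    have h1 := hFv2 w₁ t
    have h2 := hFv2 w₂ t
    have heq : Fv w₁ t = Fv w₂ t := by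
      have := congrFun hF t
      exact congrArg Subtype.val this
    calc dist ((w₁ : (Fin N → ℝ) →ᵇ ℝ) (t : (Fin N → ℝ))) ((w₂ : (Fin N → ℝ) →ᵇ ℝ) (t : (Fin N → ℝ)))
        ≤ dist ((w₁ : (Fin N → ℝ) →ᵇ ℝ) (t : (Fin N → ℝ))) (Fv w₁ t) + dist (Fv w₂ t) ((w₂ : (Fin N → ℝ) →ᵇ ℝ) (t : (Fin N → ℝ))) := by
          rw [heq]; exact dist_triangle _ _ _
      _ ≤ 2 * ε₁ := by rw [dist_comm (Fv w₂ t)]; linarith [h1, h2]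
  -- extract witnesses
  obtain ⟨w₁', u₁, hu₁, hu₁R, hu₁D, hw₁⟩ := w₁
  obtain ⟨w₂', u₂, hu₂, hu₂R, hu₂D, hw₂⟩ := w₂
  simp only at hnet ⊢
  -- Lipschitz bounds for u₁, u₂
  have hlip : ∀ (u : (Fin N → ℝ) → ℝ), ContDiff ℝ 1 u → (∀ x, ‖fderiv ℝ u x‖ ≤ R) →
      ∀ x y : (Fin N → ℝ), |u x - u y| ≤ R * dist x y := by
    intro u hu huD x y
    have := Convex.norm_image_sub_le_of_norm_fderiv_le
      (f := u) (s := (Set.univ : Set (Fin N → ℝ))) (C := R)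
      (fun z _ => (hu.differentiable one_ne_zero).differentiableAt)
      (fun z _ => huD z) convex_univ (Set.mem_univ y) (Set.mem_univ x)
    simpa [Real.norm_eq_abs, dist_eq_norm] using this
  -- pointwise estimate
  have hpt : ∀ x : (Fin N → ℝ), dist (w₁' x) (w₂' x) ≤ 3 * ε / 4 := by
    intro x
    rw [Real.dist_eq, hw₁ x, hw₂ x]
    by_cases hx : x ∈ Metric.closedBall (0 : (Fin N → ℝ)) r
    · -- inside: compare with net point
      obtain ⟨t, htT, hxt⟩ := by simpa using hTcov hx
      have hxball : x ∈ Metric.closedBall (0 : (Fin N → ℝ)) (r + 1) :=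
        Metric.closedBall_subset_closedBall (by linarith) hx
      have htball : t ∈ Metric.closedBall (0 : (Fin N → ℝ)) (r + 1) := by
        simp only [Metric.mem_closedBall] at hx ⊢
        calc dist t 0 ≤ dist t x + dist x 0 := dist_triangle _ _ _
          _ ≤ 1 + r := by rw [dist_comm t x]; linarith [hxt.le.trans hδ1]
          _ = r + 1 := by ring
      have hρxt : |ρ x - ρ t| < ε₁ := by
        have := hδ₀uc x hxball t htball (lt_of_lt_of_le hxt (min_le_left _ _))
        simpa [Real.dist_eq] using this
      have hmove : ∀ (u : (Fin N → ℝ) → ℝ), ContDiff ℝ 1 u → (∀ z, |u z| ≤ R) →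
          (∀ z, ‖fderiv ℝ u z‖ ≤ R) → |u x * ρ x - u t * ρ t| ≤ ε / 8 + ε / 8 := by
        intro u hu huR huD
        have h1 : u x * ρ x - u t * ρ t = u x * (ρ x - ρ t) + (u x - u t) * ρ t := by ring
        rw [h1]
        have h2 : |u x * (ρ x - ρ t)| ≤ R * ε₁ := by
          rw [abs_mul]
          exact mul_le_mul (huR x) hρxt.le (abs_nonneg _) hR.le
        have h3 : |(u x - u t) * ρ t| ≤ R * δ * M1 := by
          rw [abs_mul, abs_of_nonneg (hρpos t)]
          exact mul_le_mul (le_trans (hlip u hu huD x t) (by nlinarith [hxt.le])) (hM1 t)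
            (hρpos t) (by positivity)
        have hkey : ε₁ * (8 * (R + 1)) = ε := by
          rw [hε₁def]; field_simp
        have hRε₁ : R * ε₁ ≤ ε / 8 := by nlinarith [hε₁.le]
        have hRδ : R * δ * M1 ≤ ε / 8 := by
          set q := ε / (8 * (R + 1) * M1) with hq
          have hq0 : 0 ≤ q := by positivity
          have hqe : q * (8 * (R + 1) * M1) = ε := by
            rw [hq]; field_simp
          have h5 : R * M1 * δ ≤ R * M1 * q :=
            mul_le_mul_of_nonneg_left hδsmall (by positivity)
          nlinarith [mul_nonneg hq0 hM1pos.le]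
        calc |u x * (ρ x - ρ t) + (u x - u t) * ρ t|
            ≤ |u x * (ρ x - ρ t)| + |(u x - u t) * ρ t| := abs_add_le _ _
          _ ≤ ε / 8 + ε / 8 := by linarith
      have hAt : |u₁ t * ρ t - u₂ t * ρ t| ≤ 2 * ε₁ := by
        have := hnet ⟨t, htT⟩
        rw [Real.dist_eq, hw₁ t, hw₂ t] at this
        exact this
      have hkey2 : ε₁ * (8 * (R + 1)) = ε := by
        rw [hε₁def]; field_simp
      have h2ε₁ : 2 * ε₁ ≤ ε / 4 := by nlinarith [hε₁.le, mul_nonneg hR.le hε₁.le]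
      have tri1 := abs_sub_le (u₁ x * ρ x) (u₁ t * ρ t) (u₂ x * ρ x)
      have tri2 := abs_sub_le (u₁ t * ρ t) (u₂ t * ρ t) (u₂ x * ρ x)
      have e1 := hmove u₁ hu₁ hu₁R hu₁D
      have e2 := hmove u₂ hu₂ hu₂R hu₂D
      rw [abs_sub_comm (u₂ t * ρ t) (u₂ x * ρ x)] at tri2
      linarith [hAt]
    · -- outside: ρ is small
      have hxK : x ∉ K := fun h => hx (hKr h)
      have hρx : ρ x < ε₁ := hKsub hxK
      have : |u₁ x * ρ x - u₂ x * ρ x| ≤ 2 * R * ε₁ := by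
        have h1 : u₁ x * ρ x - u₂ x * ρ x = (u₁ x - u₂ x) * ρ x := by ring
        rw [h1, abs_mul, abs_of_nonneg (hρpos x)]
        have : |u₁ x - u₂ x| ≤ 2 * R := by
          calc |u₁ x - u₂ x| ≤ |u₁ x| + |u₂ x| := abs_sub _ _
            _ ≤ 2 * R := by linarith [hu₁R x, hu₂R x]
        nlinarith [hρpos x, hρx.le]
      have hkey3 : ε₁ * (8 * (R + 1)) = ε := by
        rw [hε₁def]; field_simp
      have h2Rε₁ : 2 * R * ε₁ ≤ ε / 4 := by
        nlinarith [hε₁.le, mul_nonneg hR.le hε₁.le]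
      linarith
  -- conclude
  have : dist w₁' w₂' ≤ 3 * ε / 4 :=
    (BoundedContinuousFunction.dist_le (by positivity)).mpr hpt
  calc dist w₁' w₂' ≤ 3 * ε / 4 := this
    _ < ε := by linarith
end

section
/- Let N = 1 and suppose f : ℝ → ℝ is continuous and bounded with M := sup_x |f(x)|, J : ℝ → ℝ is nonnegative, continuously differentiable, with J and J' integrable, and h : ℝ → ℝ is continuously differentiable with h' bounded. Let u : ℝ × [0,∞) → ℝ be continuous. Then for each t ≥ 0 the Duhamel term v(x,t) = ∫₀^t e^{s-t} [(J *_ρ (f∘u(·,s)))(x) + h(x)] ds is differentiable in x and |∂_x v(x,t)| ≤ M ‖J'‖_{L¹(ℝ)} ‖ρ‖_∞ + ‖h'‖_∞ for all x ∈ ℝ and t ≥ 0. -/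
open MeasureTheory Real Set

/-- The weighted convolution `(J *_ρ v)(x) = ∫ J(x-y) v(y) ρ(y) dy` on `ℝ`. -/
noncomputable def convW1 (J ρ v : ℝ → ℝ) (x : ℝ) : ℝ :=
  ∫ y, J (x - y) * v y * ρ y

/- Auxiliary lemmas -/

lemma int_shift (g : ℝ → ℝ) (x : ℝ) : (∫ y, g (x - y)) = ∫ y, g y :=
  integral_sub_left_eq_self g volume x

lemma integrable_shift_mul {g w : ℝ → ℝ} (hg : Integrable g) (hw : Continuous w)
    {C : ℝ} (hwb : ∀ y, |w y| ≤ C) (x : ℝ) :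
    Integrable (fun y => g (x - y) * w y) := by
  have h1 : Integrable (fun y => g (x - y)) := hg.comp_sub_left x
  have h2 := h1.bdd_mul (c := C) hw.aestronglyMeasurable
    (Filter.Eventually.of_forall fun y => by simpa [Real.norm_eq_abs] using hwb y)
  simpa [mul_comm] using h2

lemma cont_conv {g w : ℝ → ℝ} (hg : Integrable g) (hw : Continuous w)
    {C : ℝ} (hwb : ∀ y, |w y| ≤ C) :
    Continuous fun τ => ∫ s, g s * w (τ - s) := by
  apply continuous_of_dominated (bound := fun s => |g s| * C)
  · intro τ
    exact hg.aestronglyMeasurable.mul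
      ((hw.comp (continuous_const.sub continuous_id)).aestronglyMeasurable)
  · intro τ
    refine Filter.Eventually.of_forall fun s => ?_
    rw [Real.norm_eq_abs, abs_mul]
    exact mul_le_mul_of_nonneg_left (hwb _) (abs_nonneg _)
  · exact hg.abs.mul_const C
  · exact Filter.Eventually.of_forall fun s =>
      continuous_const.mul (hw.comp (continuous_id.sub continuous_const))

lemma conv_change (g w : ℝ → ℝ) (τ : ℝ) :
    (∫ s, g s * w (τ - s)) = ∫ y, g (τ - y) * w y := by
  have h := int_shift (fun y => g (τ - y) * w y) τ
  rw [← h]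
  congr 1
  funext s
  rw [sub_sub_cancel]

lemma prod_int {g w : ℝ → ℝ} (hgc : Continuous g) (hg : Integrable g) (hw : Continuous w)
    {C : ℝ} (hwb : ∀ y, |w y| ≤ C) (a b : ℝ) :
    Integrable (Function.uncurry fun τ y => g (τ - y) * w y)
      ((volume.restrict (Ioc a b)).prod volume) := by
  have hmeas : AEStronglyMeasurable (Function.uncurry fun τ y => g (τ - y) * w y)
      ((volume.restrict (Ioc a b)).prod volume) :=
    ((hgc.comp (continuous_fst.sub continuous_snd)).mul
      (hw.comp continuous_snd)).aestronglyMeasurable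
  rw [integrable_prod_iff hmeas]
  refine ⟨Filter.Eventually.of_forall fun τ => integrable_shift_mul hg hw hwb τ, ?_⟩
  have hC : 0 ≤ C := le_trans (abs_nonneg _) (hwb 0)
  have heq : (fun τ => ∫ y, ‖(Function.uncurry fun τ y => g (τ - y) * w y) (τ, y)‖)
      = fun τ => ∫ s, |g s| * |w (τ - s)| := by
    funext τ
    simp only [Function.uncurry, Real.norm_eq_abs, abs_mul]
    exact (conv_change (fun s => |g s|) (fun y => |w y|) τ).symm
  rw [heq]
  exact (cont_conv (w := fun y => |w y|) hg.abs hw.abs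
    (C := C) (fun y => by simpa [abs_abs] using hwb y)).integrableOn_Ioc

lemma conv_hasDerivAt (g w : ℝ → ℝ) (hg1 : ContDiff ℝ 1 g) (hg : Integrable g)
    (hg' : Integrable (deriv g)) (hw : Continuous w) {C : ℝ} (hwb : ∀ y, |w y| ≤ C) (x : ℝ) :
    HasDerivAt (fun x' => ∫ y, g (x' - y) * w y) (∫ y, deriv g (x - y) * w y) x := by
  have hg'c : Continuous (deriv g) := hg1.continuous_deriv le_rfl
  have hgd : Differentiable ℝ g := hg1.differentiable one_ne_zero
  set ψ : ℝ → ℝ := fun τ => ∫ y, deriv g (τ - y) * w y with hψdef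
  have hψc : Continuous ψ := by
    have h : ψ = fun τ => ∫ s, deriv g s * w (τ - s) :=
      funext fun τ => (conv_change _ _ τ).symm
    rw [h]
    exact cont_conv hg' hw hwb
  have hmain : ∀ a b : ℝ, a ≤ b →
      (∫ y, g (b - y) * w y) - (∫ y, g (a - y) * w y) = ∫ τ in a..b, ψ τ := by
    intro a b hab
    have hptw : ∀ y : ℝ, g (b - y) * w y - g (a - y) * w y
        = ∫ τ in Ioc a b, deriv g (τ - y) * w y := by
      intro y
      have h1 : (∫ τ in a..b, deriv g (τ - y)) = g (b - y) - g (a - y) := by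
        rw [intervalIntegral.integral_comp_sub_right (deriv g) y]
        exact intervalIntegral.integral_deriv_eq_sub (fun z _ => hgd z) hg'.intervalIntegrable
      have h2 : (∫ τ in a..b, deriv g (τ - y) * w y)
          = (∫ τ in a..b, deriv g (τ - y)) * w y := intervalIntegral.integral_mul_const _ _
      rw [← intervalIntegral.integral_of_le hab, h2, h1, sub_mul]
    calc (∫ y, g (b - y) * w y) - (∫ y, g (a - y) * w y)
        = ∫ y, (g (b - y) * w y - g (a - y) * w y) :=
          (integral_sub (integrable_shift_mul hg hw hwb b)
            (integrable_shift_mul hg hw hwb a)).symm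
      _ = ∫ y, ∫ τ in Ioc a b, deriv g (τ - y) * w y := by
          congr 1; funext y; exact hptw y
      _ = ∫ τ in Ioc a b, ∫ y, deriv g (τ - y) * w y :=
          (integral_integral_swap (prod_int hg'c hg' hw hwb a b)).symm
      _ = ∫ τ in a..b, ψ τ := by rw [intervalIntegral.integral_of_le hab]
  have hall : ∀ z : ℝ, (∫ y, g (z - y) * w y)
      = (∫ y, g (0 - y) * w y) + ∫ τ in (0:ℝ)..z, ψ τ := by
    intro z
    rcases le_total 0 z with hz | hz
    · have h := hmain 0 z hz; linarith
    · have h := hmain z 0 hz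
      rw [intervalIntegral.integral_symm]
      linarith
  have hFTC : HasDerivAt (fun z => (∫ y, g (0 - y) * w y) + ∫ τ in (0:ℝ)..z, ψ τ) (ψ x) x := by
    have h1 : HasDerivAt (fun z => ∫ τ in (0:ℝ)..z, ψ τ) (ψ x) x :=
      intervalIntegral.integral_hasDerivAt_right (hψc.intervalIntegrable _ _)
        (hψc.stronglyMeasurableAtFilter _ _) hψc.continuousAt
    exact h1.const_add _
  have heqf : (fun x' => ∫ y, g (x' - y) * w y)
      = fun z => (∫ y, g (0 - y) * w y) + ∫ τ in (0:ℝ)..z, ψ τ := funext hall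
  rw [heqf]
  exact hFTC

lemma conv_bound_s13 {g w : ℝ → ℝ} (hg : Integrable g) (hw : Continuous w)
    {C : ℝ} (hwb : ∀ y, |w y| ≤ C) (x : ℝ) :
    |∫ y, g (x - y) * w y| ≤ (∫ y, |g y|) * C := by
  calc |∫ y, g (x - y) * w y| ≤ ∫ y, |g (x - y) * w y| := by
        simpa only [Real.norm_eq_abs] using norm_integral_le_integral_norm (fun y => g (x - y) * w y)
    _ ≤ ∫ y, |g (x - y)| * C := by
        refine integral_mono (integrable_shift_mul hg hw hwb x).abs
          (((hg.comp_sub_left x).abs).mul_const C) fun y => ?_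
        rw [abs_mul]
        exact mul_le_mul_of_nonneg_left (hwb y) (abs_nonneg _)
    _ = (∫ y, |g (x - y)|) * C := integral_mul_const C _
    _ = (∫ y, |g y|) * C := by rw [int_shift (fun y => |g y|) x]

/-- N = 1: with `f` continuous bounded (`M = sup |f|`), `J` nonnegative
`C¹` with `J, J'` integrable, and `h` `C¹` with `h'` bounded, the Duhamel term
`v(x,t) = ∫₀^t e^{s-t} [(J *_ρ (f∘u(·,s)))(x) + h(x)] ds` is differentiable in `x` with
`|∂ₓ v(x,t)| ≤ M ‖J'‖_{L¹} ‖ρ‖_∞ + ‖h'‖_∞` for all `x ∈ ℝ`, `t ≥ 0`. -/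
theorem duhamel_term_derivative_bounded
    (J ρ h : ℝ → ℝ)
    (hJ1 : ContDiff ℝ 1 J) (hJint : Integrable J)
    (hJ'int : Integrable (deriv J)) (hJpos : ∀ x, 0 ≤ J x)
    (hρcont : Continuous ρ) (hρpos : ∀ x, 0 ≤ ρ x)
    (hρbdd : BddAbove (Set.range ρ)) (hρint : Integrable ρ)
    (hh1 : ContDiff ℝ 1 h) (hhbdd : BddAbove (Set.range fun x => |h x|))
    (hh'bdd : BddAbove (Set.range fun x => |deriv h x|))
    (f : ℝ → ℝ) (hfc : Continuous f)
    (hfbdd : BddAbove (Set.range fun y => |f y|))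
    (u : ℝ → ℝ → ℝ)
    (huc : Continuous (fun p : ℝ × ℝ => u p.1 p.2))
    (t : ℝ) (ht : 0 ≤ t) :
    ∃ d : ℝ → ℝ,
      (∀ x : ℝ, HasDerivAt
        (fun x' => ∫ s in (0:ℝ)..t,
          Real.exp (s - t) * (convW1 J ρ (fun y => f (u y s)) x' + h x')) (d x) x) ∧
      ∀ x : ℝ, |d x| ≤
        (⨆ y, |f y|) * (∫ y, |deriv J y|) * (⨆ z, ρ z) + (⨆ z, |deriv h z|) := by
  set Cf : ℝ := ⨆ y, |f y| with hCfdef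
  set Cρ : ℝ := ⨆ z, ρ z with hCρdef
  have hCf0 : 0 ≤ Cf := le_trans (abs_nonneg (f 0)) (le_ciSup hfbdd 0)
  have hCρ0 : 0 ≤ Cρ := le_trans (hρpos 0) (le_ciSup hρbdd 0)
  have hfle : ∀ z, |f z| ≤ Cf := fun z => le_ciSup hfbdd z
  have hρle : ∀ z, ρ z ≤ Cρ := fun z => le_ciSup hρbdd z
  have hexp : (∫ s in (0:ℝ)..t, Real.exp (s - t)) = 1 - Real.exp (-t) := by
    rw [intervalIntegral.integral_comp_sub_right Real.exp t, integral_exp]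
    simp
  have hexple : ∀ s : ℝ, s ≤ t → Real.exp (s - t) ≤ 1 := by
    intro s hs
    calc Real.exp (s - t) ≤ Real.exp 0 := Real.exp_le_exp.mpr (by linarith)
      _ = 1 := Real.exp_zero
  -- the effective kernel weight
  set w : ℝ → ℝ := fun y => (∫ s in (0:ℝ)..t, Real.exp (s - t) * f (u y s)) * ρ y with hwdef
  have huncont : Continuous (Function.uncurry fun y s => Real.exp (s - t) * f (u y s)) := by
    have : Continuous fun p : ℝ × ℝ => Real.exp (p.2 - t) * f (u p.1 p.2) :=
      (Real.continuous_exp.comp (continuous_snd.sub continuous_const)).mul (hfc.comp huc)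
    exact this
  have hwcont : Continuous w := by
    refine Continuous.mul ?_ hρcont
    exact intervalIntegral.continuous_parametric_intervalIntegral_of_continuous' huncont 0 t
  have hwb : ∀ y, |w y| ≤ Cf * Cρ := by
    intro y
    rw [hwdef]
    simp only
    rw [abs_mul, abs_of_nonneg (hρpos y)]
    have h1 : |∫ s in (0:ℝ)..t, Real.exp (s - t) * f (u y s)| ≤ Cf := by
      have hc1 : Continuous fun s => Real.exp (s - t) * f (u y s) := by
        have : Continuous fun s : ℝ => u y s :=
          huc.comp (continuous_const.prodMk continuous_id)
        exact (Real.continuous_exp.comp (continuous_id.sub continuous_const)).mul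
          (hfc.comp this)
      calc |∫ s in (0:ℝ)..t, Real.exp (s - t) * f (u y s)|
          ≤ ∫ s in (0:ℝ)..t, |Real.exp (s - t) * f (u y s)| :=
            intervalIntegral.abs_integral_le_integral_abs ht
        _ ≤ ∫ s in (0:ℝ)..t, Real.exp (s - t) * Cf := by
            refine intervalIntegral.integral_mono_on ht (hc1.abs.intervalIntegrable _ _)
              (Continuous.intervalIntegrable (by continuity) _ _) fun s _ => ?_
            rw [abs_mul, abs_of_pos (Real.exp_pos _)]
            exact mul_le_mul_of_nonneg_left (hfle _) (Real.exp_pos _).le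
        _ = (1 - Real.exp (-t)) * Cf := by
            rw [intervalIntegral.integral_mul_const, hexp]
        _ ≤ Cf := by nlinarith [Real.exp_pos (-t)]
    exact mul_le_mul h1 (hρle y) (hρpos y) hCf0
  -- the function identity
  have hiden : ∀ x' : ℝ,
      (∫ s in (0:ℝ)..t, Real.exp (s - t) * (convW1 J ρ (fun y => f (u y s)) x' + h x'))
        = (∫ y, J (x' - y) * w y) + (1 - Real.exp (-t)) * h x' := by
    intro x'
    set F : ℝ × ℝ → ℝ :=
      fun p => Real.exp (p.1 - t) * (J (x' - p.2) * f (u p.2 p.1) * ρ p.2) with hFdef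
    have hFc : Continuous F := by
      refine (Real.continuous_exp.comp (continuous_fst.sub continuous_const)).mul ?_
      exact ((hJ1.continuous.comp (continuous_const.sub continuous_snd)).mul
        (hfc.comp (huc.comp (continuous_snd.prodMk continuous_fst)))).mul
        (hρcont.comp continuous_snd)
    have hws : ∀ s : ℝ, Continuous fun y => f (u y s) * ρ y := by
      intro s
      exact (hfc.comp (huc.comp (continuous_id.prodMk continuous_const))).mul hρcont
    have hwsb : ∀ s y : ℝ, |f (u y s) * ρ y| ≤ Cf * Cρ := by
      intro s y
      rw [abs_mul, abs_of_nonneg (hρpos y)]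
      exact mul_le_mul (hfle _) (hρle y) (hρpos y) hCf0
    have hFs : ∀ s : ℝ, Integrable (fun y => F (s, y)) := by
      intro s
      have base := integrable_shift_mul hJint (hws s) (hwsb s) x'
      have := base.const_mul (Real.exp (s - t))
      simpa [hFdef, mul_assoc] using this
    have hFint : Integrable F ((volume.restrict (Ioc 0 t)).prod volume) := by
      rw [integrable_prod_iff hFc.aestronglyMeasurable]
      constructor
      · exact Filter.Eventually.of_forall fun s => hFs s
      · refine Integrable.mono'
          (integrable_const ((∫ y, |J y|) * (Cf * Cρ)))
          (hFc.aestronglyMeasurable.norm.integral_prod_right') ?_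
        filter_upwards [ae_restrict_mem measurableSet_Ioc] with s hs
        have hsle : s ≤ t := hs.2
        have hnn : 0 ≤ ∫ y, ‖F (s, y)‖ := integral_nonneg fun y => norm_nonneg _
        rw [Real.norm_eq_abs, abs_of_nonneg hnn]
        calc ∫ y, ‖F (s, y)‖ ≤ ∫ y, |J (x' - y)| * (Cf * Cρ) := by
              refine integral_mono (hFs s).norm
                (((hJint.comp_sub_left x').abs).mul_const _) fun y => ?_
              have h2 : |ρ y| ≤ Cρ := by
                rw [abs_of_nonneg (hρpos y)]; exact hρle y
              have h1 : |Real.exp (s - t)| ≤ 1 := by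
                rw [abs_of_pos (Real.exp_pos _)]; exact hexple s hsle
              have hinner : |J (x' - y) * f (u y s) * ρ y|
                  ≤ |J (x' - y)| * Cf * Cρ := by
                rw [abs_mul, abs_mul]
                exact mul_le_mul (mul_le_mul_of_nonneg_left (hfle _) (abs_nonneg _)) h2
                  (abs_nonneg _) (by positivity)
              calc ‖F (s, y)‖ = |Real.exp (s - t)| * |J (x' - y) * f (u y s) * ρ y| := by
                    rw [hFdef]; simp [Real.norm_eq_abs, abs_mul]
                _ ≤ 1 * (|J (x' - y)| * Cf * Cρ) :=
                    mul_le_mul h1 hinner (abs_nonneg _) zero_le_one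
                _ = |J (x' - y)| * (Cf * Cρ) := by ring
          _ = (∫ y, |J (x' - y)|) * (Cf * Cρ) := integral_mul_const _ _
          _ = (∫ y, |J y|) * (Cf * Cρ) := by rw [int_shift (fun y => |J y|) x']
    have hFy : ∀ s : ℝ, (∫ y, F (s, y))
        = Real.exp (s - t) * convW1 J ρ (fun y => f (u y s)) x' := by
      intro s
      rw [hFdef]
      simp only [convW1]
      exact integral_const_mul _ _
    have hI1 : IntervalIntegrable
        (fun s => Real.exp (s - t) * convW1 J ρ (fun y => f (u y s)) x') volume 0 t := by
      rw [intervalIntegrable_iff_integrableOn_Ioc_of_le ht]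
      have := hFint.integral_prod_left
      have heq2 : (fun s => ∫ y, F (s, y))
          = fun s => Real.exp (s - t) * convW1 J ρ (fun y => f (u y s)) x' := funext hFy
      rw [heq2] at this
      exact this
    have hI2 : IntervalIntegrable (fun s => Real.exp (s - t) * h x') volume 0 t :=
      Continuous.intervalIntegrable (by continuity) _ _
    have hfirst : (∫ s in (0:ℝ)..t, Real.exp (s - t) * convW1 J ρ (fun y => f (u y s)) x')
        = ∫ y, J (x' - y) * w y := by
      rw [intervalIntegral.integral_of_le ht]
      calc (∫ s in Ioc 0 t, Real.exp (s - t) * convW1 J ρ (fun y => f (u y s)) x')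
          = ∫ s in Ioc 0 t, ∫ y, F (s, y) := by
            congr 1; funext s; exact (hFy s).symm
        _ = ∫ y, ∫ s in Ioc 0 t, F (s, y) :=
            integral_integral_swap (f := fun s y => F (s, y)) (by exact hFint)
        _ = ∫ y, J (x' - y) * w y := by
            congr 1; funext y
            have hFy2 : (fun s => F (s, y))
                = fun s => (J (x' - y) * ρ y) * (Real.exp (s - t) * f (u y s)) := by
              funext s; rw [hFdef]; ring
            rw [hFy2, integral_const_mul, ← intervalIntegral.integral_of_le ht, hwdef]
            ring
    calc (∫ s in (0:ℝ)..t, Real.exp (s - t) * (convW1 J ρ (fun y => f (u y s)) x' + h x'))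
        = ∫ s in (0:ℝ)..t, (Real.exp (s - t) * convW1 J ρ (fun y => f (u y s)) x'
            + Real.exp (s - t) * h x') := by
          congr 1; funext s; ring
      _ = (∫ s in (0:ℝ)..t, Real.exp (s - t) * convW1 J ρ (fun y => f (u y s)) x')
          + ∫ s in (0:ℝ)..t, Real.exp (s - t) * h x' :=
          intervalIntegral.integral_add hI1 hI2
      _ = (∫ y, J (x' - y) * w y) + (1 - Real.exp (-t)) * h x' := by
          rw [hfirst, intervalIntegral.integral_mul_const, hexp]
  refine ⟨fun x => (∫ y, deriv J (x - y) * w y) + (1 - Real.exp (-t)) * deriv h x, ?_, ?_⟩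
  · intro x
    have hEq : (fun x' => ∫ s in (0:ℝ)..t,
        Real.exp (s - t) * (convW1 J ρ (fun y => f (u y s)) x' + h x'))
        = fun x' => (∫ y, J (x' - y) * w y) + (1 - Real.exp (-t)) * h x' := funext hiden
    rw [hEq]
    exact (conv_hasDerivAt J w hJ1 hJint hJ'int hwcont hwb x).add
      (((hh1.differentiable one_ne_zero x).hasDerivAt).const_mul _)
  · intro x
    have h1 := conv_bound_s13 hJ'int hwcont hwb x
    have h2 : |deriv h x| ≤ ⨆ z, |deriv h z| := le_ciSup hh'bdd x
    have h2nn : 0 ≤ ⨆ z, |deriv h z| := le_trans (abs_nonneg _) (le_ciSup hh'bdd 0)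
    have h3 : |1 - Real.exp (-t)| ≤ 1 := by
      have he1 : Real.exp (-t) ≤ 1 := by
        calc Real.exp (-t) ≤ Real.exp 0 := Real.exp_le_exp.mpr (by linarith)
          _ = 1 := Real.exp_zero
      rw [abs_of_nonneg (by linarith)]
      nlinarith [Real.exp_pos (-t)]
    calc |(∫ y, deriv J (x - y) * w y) + (1 - Real.exp (-t)) * deriv h x|
        ≤ |∫ y, deriv J (x - y) * w y| + |(1 - Real.exp (-t)) * deriv h x| := abs_add_le _ _
      _ ≤ (∫ y, |deriv J y|) * (Cf * Cρ) + 1 * (⨆ z, |deriv h z|) := by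
          refine add_le_add h1 ?_
          rw [abs_mul]
          exact mul_le_mul h3 h2 (abs_nonneg _) zero_le_one
      _ = Cf * (∫ y, |deriv J y|) * Cρ + (⨆ z, |deriv h z|) := by ring
end

section
/- Suppose f : ℝ → ℝ is continuous, bounded, strictly increasing, with 0 ≤ f(x) ≤ M for all x, and let g : ℝ → ℝ satisfy g(f(x)) = x for all x ∈ ℝ with r ↦ |g(r)| integrable on (0,M), L := ∫₀^M |g(r)| dr. Then for every continuous u : ℝ^N → ℝ with ‖u‖_ρ < ∞, the Lyapunov functional F(u) = ∫_{ℝ^N} [ -½ f(u(x)) (J *_ρ (f∘u))(x) + ∫₀^{f(u(x))} g(r) dr - h(x) f(u(x)) ] ρ(x) dx is well defined (the integrand is integrable) and satisfies |F(u)| ≤ ½ M² ‖J‖_{L¹(ℝ^N)} ‖ρ‖_∞ ‖ρ‖_{L¹(ℝ^N)} + L ‖ρ‖_{L¹(ℝ^N)} + M ‖h‖_∞ ‖ρ‖_{L¹(ℝ^N)} < ∞. -/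
open MeasureTheory Real

/-- The integrand of the Lyapunov functional. -/
noncomputable def lyapIntegrand {N : ℕ} (J ρ h : (Fin N → ℝ) → ℝ) (f g : ℝ → ℝ)
    (u : (Fin N → ℝ) → ℝ) (x : Fin N → ℝ) : ℝ :=
  (-(1/2) * f (u x) * convW J ρ (fun y => f (u y)) x
    + (∫ r in (0:ℝ)..(f (u x)), g r) - h x * f (u x)) * ρ x

/-- The Lyapunov functional
`F(u) = ∫ [ -½ f(u(x)) (J *_ρ (f∘u))(x) + ∫₀^{f(u(x))} g(r) dr - h(x) f(u(x)) ] ρ(x) dx`,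
where `g` is (an extension of) `f⁻¹`. -/
noncomputable def lyap {N : ℕ} (J ρ h : (Fin N → ℝ) → ℝ) (f g : ℝ → ℝ)
    (u : (Fin N → ℝ) → ℝ) : ℝ :=
  ∫ x, lyapIntegrand J ρ h f g u x

/-- Auxiliary: for an *arbitrary* `g : ℝ → ℝ` (possibly non-measurable) and a continuous
`w` with values in `[0, M]`, the map `x ↦ ∫_{(0, w x]} g` is measurable. -/
lemma measurable_primitive_comp {α : Type*} [MeasurableSpace α] [TopologicalSpace α]
    [OpensMeasurableSpace α] [Nonempty α] (g : ℝ → ℝ) (w : α → ℝ) (hw : Continuous w)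
    (hw0 : ∀ x, 0 ≤ w x) (M : ℝ) (hwM : ∀ x, w x ≤ M) :
    Measurable fun x => ∫ r in Set.Ioc (0:ℝ) (w x), g r := by
  classical
  set ψ : ℝ → ℝ := fun c => ∫ r in Set.Ioc (0:ℝ) c, g r with hψ
  set T : Set ℝ := {c | 0 ≤ c ∧ c ≤ M ∧ IntegrableOn g (Set.Ioc 0 c)} with hT
  have hM0 : 0 ≤ M := (hw0 (Classical.arbitrary _)).trans (hwM _)
  have h0T : (0:ℝ) ∈ T := by
    refine ⟨le_rfl, hM0, ?_⟩
    simp [IntegrableOn]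
  have hTne : T.Nonempty := ⟨0, h0T⟩
  have hTbdd : BddAbove T := ⟨M, fun c hc => hc.2.1⟩
  set t : ℝ := sSup T with ht
  have ht0 : 0 ≤ t := le_csSup hTbdd h0T
  have htM : t ≤ M := csSup_le hTne fun c hc => hc.2.1
  -- downward closedness
  have hdown : ∀ c ∈ T, ∀ c', 0 ≤ c' → c' ≤ c → c' ∈ T := by
    intro c hc c' h0 hle
    exact ⟨h0, hle.trans hc.2.1, hc.2.2.mono_set (Set.Ioc_subset_Ioc_right hle)⟩
  -- sequence tₙ ↑ t inside T
  set ts : ℕ → ℝ := fun n => t - t / (n + 1) with hts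
  have hts_mem : ∀ n, ts n ∈ T := by
    intro n
    rcases eq_or_lt_of_le ht0 with h | h
    · have : ts n = 0 := by simp [hts, ← h]
      rw [this]; exact h0T
    · have hlt : ts n < t := by
        have : 0 < t / (n + 1) := div_pos h (by positivity)
        simp [hts]; linarith
      obtain ⟨c, hcT, hlt'⟩ := exists_lt_of_lt_csSup hTne hlt
      refine hdown c hcT _ ?_ hlt'.le
      have h1 : t / ((n:ℝ) + 1) ≤ t / 1 := by
        apply div_le_div_of_nonneg_left h.le one_pos
        linarith [Nat.cast_nonneg (α := ℝ) n]
      simp [hts]; linarith [h1]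
  have hts_nonneg : ∀ n, 0 ≤ ts n := fun n => (hts_mem n).1
  have hts_le : ∀ n, ts n ≤ t := by
    intro n
    have : 0 ≤ t / (n + 1) := by positivity
    simp [hts]; linarith
  have hts_tendsto : Filter.Tendsto ts Filter.atTop (nhds t) := by
    have h1 : Filter.Tendsto (fun n : ℕ => t / (n + 1)) Filter.atTop (nhds 0) := by
      apply Filter.Tendsto.div_atTop (tendsto_const_nhds)
      exact Filter.tendsto_atTop_add_const_right _ 1 tendsto_natCast_atTop_atTop
    have := Filter.Tendsto.sub (tendsto_const_nhds (x := t)) h1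
    simpa using this
  -- continuity of ψ on [0, ts n]
  have hψcont : ∀ n, ContinuousOn ψ (Set.Icc 0 (ts n)) := by
    intro n
    apply intervalIntegral.continuousOn_primitive
    have h1 : IntegrableOn g (Set.Ioc 0 (ts n)) := (hts_mem n).2.2
    have h2 : IntegrableOn g {(0:ℝ)} := by simp [IntegrableOn]
    have := h2.union h1
    apply this.mono_set
    intro c hc
    rcases eq_or_lt_of_le hc.1 with h | h
    · exact Or.inl (by simp [← h])
    · exact Or.inr ⟨h, hc.2⟩
  -- approximating functions
  set G : ℕ → α → ℝ := fun n x =>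
    if w x < t then ψ (min (w x) (ts n)) else if w x = t then ψ t else 0 with hG
  have hGmeas : ∀ n, Measurable (G n) := by
    intro n
    have hc1 : Continuous fun x => ψ (min (w x) (ts n)) := by
      apply (hψcont n).comp_continuous (hw.min continuous_const)
      intro x
      exact ⟨le_min (hw0 x) (hts_nonneg n), min_le_right _ _⟩
    have hs1 : MeasurableSet {x | w x < t} := measurableSet_lt hw.measurable measurable_const
    have hs2 : MeasurableSet {x | w x = t} :=
      hw.measurable (measurableSet_singleton t)
    exact Measurable.ite hs1 hc1.measurable
      (Measurable.ite hs2 measurable_const measurable_const)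
  have hGtendsto : ∀ x, Filter.Tendsto (fun n => G n x) Filter.atTop (nhds (ψ (w x))) := by
    intro x
    rcases lt_trichotomy (w x) t with hlt | heq | hgt
    · have : ∀ᶠ n in Filter.atTop, G n x = ψ (w x) := by
        have := hts_tendsto.eventually (eventually_gt_nhds hlt)
        filter_upwards [this] with n hn
        simp [hG, hlt, min_eq_left hn.le]
      exact Filter.Tendsto.congr' (this.mono fun n hn => hn.symm) tendsto_const_nhds
    · have : ∀ n, G n x = ψ (w x) := by intro n; simp [hG, heq]
      simpa [this] using tendsto_const_nhds
    · have hnot : ¬ IntegrableOn g (Set.Ioc 0 (w x)) := by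
        intro hint
        have : w x ∈ T := ⟨hw0 x, hwM x, hint⟩
        exact absurd (le_csSup hTbdd this) (not_le.mpr hgt)
      have h1 : ψ (w x) = 0 := integral_undef hnot
      have : ∀ n, G n x = 0 := by
        intro n; simp [hG, not_lt.mpr hgt.le, ne_of_gt hgt]
      simpa [this, h1] using tendsto_const_nhds
  exact measurable_of_tendsto_metrizable hGmeas
    (tendsto_pi_nhds.mpr hGtendsto)

/-- the Lyapunov functional is well defined on `C_ρ(ℝ^N)` and satisfies
`|F(u)| ≤ ½ M² ‖J‖_{L¹} ‖ρ‖_∞ ‖ρ‖_{L¹} + L ‖ρ‖_{L¹} + M ‖h‖_∞ ‖ρ‖_{L¹}`. -/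
theorem lyapunov_functional_well_defined {N : ℕ} (hN : 1 ≤ N)
    (J ρ h : (Fin N → ℝ) → ℝ)
    (hJint : Integrable J) (hJpos : ∀ x, 0 ≤ J x)
    (hρcont : Continuous ρ) (hρpos : ∀ x, 0 ≤ ρ x)
    (hρbdd : BddAbove (Set.range ρ)) (hρint : Integrable ρ)
    (hhcont : Continuous h) (hhbdd : BddAbove (Set.range fun x => |h x|))
    (f g : ℝ → ℝ) (hfc : Continuous f) (hfmono : StrictMono f)
    (M : ℝ) (hf0 : ∀ x : ℝ, 0 ≤ f x) (hfM : ∀ x : ℝ, f x ≤ M)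
    (hg : ∀ x : ℝ, g (f x) = x)
    (hgint : IntervalIntegrable (fun r => |g r|) volume 0 M)
    (L : ℝ) (hL : L = ∫ r in (0:ℝ)..M, |g r|)
    (u : (Fin N → ℝ) → ℝ) (hucont : Continuous u)
    (hubdd : BddAbove (Set.range fun x => |u x| * ρ x)) :
    Integrable (lyapIntegrand J ρ h f g u) ∧
      |lyap J ρ h f g u| ≤
        (1/2) * M^2 * (∫ y, J y) * (⨆ z, ρ z) * (∫ z, ρ z)
          + L * (∫ z, ρ z) + M * (⨆ z, |h z|) * (∫ z, ρ z) := by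
  classical
  set Sρ : ℝ := ⨆ z, ρ z with hSρ
  set Sh : ℝ := ⨆ z, |h z| with hSh
  have hρle : ∀ z, ρ z ≤ Sρ := fun z => le_ciSup hρbdd z
  have hhle : ∀ z, |h z| ≤ Sh := fun z => le_ciSup hhbdd z
  have hSρ0 : 0 ≤ Sρ := (hρpos default).trans (hρle default)
  have hSh0 : 0 ≤ Sh := (abs_nonneg _).trans (hhle default)
  have hM0 : 0 ≤ M := (hf0 0).trans (hfM 0)
  have hJ0 : 0 ≤ ∫ y, J y := integral_nonneg hJpos
  have hρ0 : 0 ≤ ∫ z, ρ z := integral_nonneg hρpos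
  have hL0 : 0 ≤ L := by
    rw [hL]
    exact intervalIntegral.integral_nonneg hM0 fun r _ => abs_nonneg _
  -- the weighted function m = (f ∘ u) * ρ
  set m : (Fin N → ℝ) → ℝ := fun y => f (u y) * ρ y with hm
  have hmcont : Continuous m := (hfc.comp hucont).mul hρcont
  have hmbd : ∀ y, |m y| ≤ M * Sρ := by
    intro y
    rw [hm, abs_mul, abs_of_nonneg (hf0 _), abs_of_nonneg (hρpos _)]
    exact mul_le_mul (hfM _) (hρle _) (hρpos _) hM0
  -- rewrite the convolution
  have key : ∀ x, convW J ρ (fun y => f (u y)) x = ∫ t, J t * m (x - t) := by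
    intro x
    have h1 := integral_sub_left_eq_self (fun t => J t * m (x - t)) volume x
    rw [convW, ← h1]
    congr 1
    ext y
    simp [hm, mul_assoc]
  -- continuity of the convolution
  have hconvcont : Continuous (convW J ρ fun y => f (u y)) := by
    have : Continuous fun x => ∫ t, J t * m (x - t) := by
      apply continuous_of_dominated (bound := fun t => |J t| * (M * Sρ))
      · intro x
        exact hJint.aestronglyMeasurable.mul
          ((hmcont.comp (continuous_const.sub continuous_id)).aestronglyMeasurable)
      · intro x
        filter_upwards with t
        rw [Real.norm_eq_abs, abs_mul]
        exact mul_le_mul_of_nonneg_left (hmbd _) (abs_nonneg _)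
      · exact hJint.abs.mul_const _
      · filter_upwards with t
        exact continuous_const.mul (hmcont.comp (continuous_id.sub continuous_const))
    have heq : (convW J ρ fun y => f (u y)) = fun x => ∫ t, J t * m (x - t) :=
      funext key
    rw [heq]; exact this
  -- bound on the convolution
  have hconvbd : ∀ x, |convW J ρ (fun y => f (u y)) x| ≤ M * Sρ * (∫ y, J y) := by
    intro x
    rw [key x]
    calc |∫ t, J t * m (x - t)| ≤ ∫ t, |J t| * |m (x - t)| := by
          simpa [Real.norm_eq_abs, abs_mul] using
            norm_integral_le_integral_norm (fun t => J t * m (x - t))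
      _ ≤ ∫ t, J t * (M * Sρ) := by
          apply integral_mono_of_nonneg
            (Filter.Eventually.of_forall fun t => mul_nonneg (abs_nonneg _) (abs_nonneg _))
            (hJint.mul_const _)
          filter_upwards with t
          rw [abs_of_nonneg (hJpos t)]
          exact mul_le_mul_of_nonneg_left (hmbd _) (hJpos t)
      _ = M * Sρ * (∫ y, J y) := by rw [integral_mul_const]; ring
  -- bound on the primitive term
  have hmid : ∀ x, |∫ r in (0:ℝ)..(f (u x)), g r| ≤ L := by
    intro x
    rw [intervalIntegral.integral_of_le (hf0 (u x))]
    calc |∫ r in Set.Ioc (0:ℝ) (f (u x)), g r|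
        ≤ ∫ r in Set.Ioc (0:ℝ) (f (u x)), |g r| := by
          simpa [Real.norm_eq_abs] using
            norm_integral_le_integral_norm (μ := volume.restrict (Set.Ioc (0:ℝ) (f (u x)))) g
      _ ≤ ∫ r in Set.Ioc (0:ℝ) M, |g r| := by
          apply setIntegral_mono_set hgint.1
          · filter_upwards with r; exact abs_nonneg _
          · exact Filter.Eventually.of_forall
              (Set.Ioc_subset_Ioc_right (hfM (u x)))
      _ = L := by rw [hL, intervalIntegral.integral_of_le hM0]
  -- pointwise bound on the integrand
  set C : ℝ := (1/2) * M^2 * (∫ y, J y) * Sρ + L + M * Sh with hC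
  have hbd : ∀ x, |lyapIntegrand J ρ h f g u x| ≤ C * ρ x := by
    intro x
    rw [lyapIntegrand, abs_mul, abs_of_nonneg (hρpos x)]
    apply mul_le_mul_of_nonneg_right _ (hρpos x)
    have h1 : |(-(1/2) : ℝ) * f (u x) * convW J ρ (fun y => f (u y)) x|
        ≤ (1/2) * M^2 * (∫ y, J y) * Sρ := by
      rw [abs_mul, abs_mul]
      have e1 : |(-(1/2) : ℝ)| = 1/2 := by norm_num
      rw [e1, abs_of_nonneg (hf0 _)]
      have := hconvbd x
      nlinarith [hf0 (u x), hfM (u x), abs_nonneg (convW J ρ (fun y => f (u y)) x),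
        mul_le_mul (hfM (u x)) this (abs_nonneg _) hM0]
    have h2 := hmid x
    have h3 : |h x * f (u x)| ≤ M * Sh := by
      rw [abs_mul, abs_of_nonneg (hf0 _)]
      calc |h x| * f (u x) ≤ Sh * M :=
            mul_le_mul (hhle x) (hfM _) (hf0 _) hSh0
        _ = M * Sh := mul_comm _ _
    calc |(-(1/2) * f (u x) * convW J ρ (fun y => f (u y)) x
          + (∫ r in (0:ℝ)..(f (u x)), g r) - h x * f (u x))|
        ≤ |(-(1/2) * f (u x) * convW J ρ (fun y => f (u y)) x)|
            + |∫ r in (0:ℝ)..(f (u x)), g r| + |h x * f (u x)| := by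
          apply (abs_sub _ _).trans
          gcongr
          exact abs_add_le _ _
      _ ≤ C := by rw [hC]; linarith
  -- measurability of the integrand
  have hmeas : AEStronglyMeasurable (lyapIntegrand J ρ h f g u) volume := by
    have h1 : Continuous fun x => -(1/2) * f (u x) * convW J ρ (fun y => f (u y)) x :=
      (continuous_const.mul (hfc.comp hucont)).mul hconvcont
    have h2 : Measurable fun x => ∫ r in (0:ℝ)..(f (u x)), g r := by
      have e : (fun x => ∫ r in (0:ℝ)..(f (u x)), g r)
          = fun x => ∫ r in Set.Ioc (0:ℝ) (f (u x)), g r := by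
        ext x; exact intervalIntegral.integral_of_le (hf0 (u x))
      rw [e]
      exact measurable_primitive_comp g (fun x => f (u x)) (hfc.comp hucont)
        (fun x => hf0 _) M (fun x => hfM _)
    have h3 : Continuous fun x => h x * f (u x) := hhcont.mul (hfc.comp hucont)
    have : AEStronglyMeasurable (fun x =>
        -(1/2) * f (u x) * convW J ρ (fun y => f (u y)) x
          + (∫ r in (0:ℝ)..(f (u x)), g r) - h x * f (u x)) volume :=
      (h1.aestronglyMeasurable.add h2.aestronglyMeasurable).sub h3.aestronglyMeasurable
    exact this.mul hρcont.aestronglyMeasurable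
  have hint : Integrable (lyapIntegrand J ρ h f g u) := by
    apply Integrable.mono' (hρint.const_mul C) hmeas
    filter_upwards with x
    rw [Real.norm_eq_abs]
    exact hbd x
  refine ⟨hint, ?_⟩
  calc |lyap J ρ h f g u| ≤ ∫ x, |lyapIntegrand J ρ h f g u x| := by
        simpa [lyap, Real.norm_eq_abs] using
          norm_integral_le_integral_norm (lyapIntegrand J ρ h f g u)
    _ ≤ ∫ x, C * ρ x :=
        integral_mono_of_nonneg (Filter.Eventually.of_forall fun x => abs_nonneg _)
          (hρint.const_mul C) (Filter.Eventually.of_forall hbd)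
    _ = C * ∫ z, ρ z := integral_const_mul _ _
    _ = (1/2) * M^2 * (∫ y, J y) * Sρ * (∫ z, ρ z)
          + L * (∫ z, ρ z) + M * Sh * (∫ z, ρ z) := by rw [hC]; ring
end
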